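/- arXiv:2110.07346 — 4 statements merged into one kernel-verified Lean document; each statement's English description precedes it below -/
import Mathlib

section
/- Potential reduction theorem: let G be a game with weights in ℤ ∪ {∞} and let φ : V → ℕ ∪ {∞} be a potential satisfying φ(v) ≤ En_G(v) for all v ∈ V. Then for every vertex v ∈ V, En_G(v) = φ(v) + En_{G_φ}(v) (with the convention ∞ + x = ∞). -/
attribute [local instance] Classical.propDecidable

/-- A game: a directed graph `E` on vertex set `V` with no sink, edge weights `wt : V → V → R`,
and a partition of the vertices into those belonging to Min (`isMin`) and to Max (the rest). -/
structure Game (V : Type) (R : Type) where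
  E : V → V → Prop
  wt : V → V → R
  isMin : V → Prop
  nosink : ∀ v, ∃ u, E v u

namespace Game

variable {V : Type} {R : Type}

/-- A strategy for Min: a choice of an outgoing edge at every Min vertex. -/
def MinStrat (G : Game V R) : Type := {σ : V → V // ∀ v, G.isMin v → G.E v (σ v)}

/-- A strategy for Max: a choice of an outgoing edge at every Max vertex. -/
def MaxStrat (G : Game V R) : Type := {τ : V → V // ∀ v, ¬ G.isMin v → G.E v (τ v)}

/-- An infinite path in the graph. -/
def IsPath (G : Game V R) (π : ℕ → V) : Prop := ∀ i, G.E (π i) (π (i + 1))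

/-- Consistency of an infinite path with a Min strategy. -/
def ConsMin (G : Game V R) (σ : G.MinStrat) (π : ℕ → V) : Prop :=
  ∀ i, G.isMin (π i) → π (i + 1) = σ.1 (π i)

/-- Consistency of an infinite path with a Max strategy. -/
def ConsMax (G : Game V R) (τ : G.MaxStrat) (π : ℕ → V) : Prop :=
  ∀ i, ¬ G.isMin (π i) → π (i + 1) = τ.1 (π i)

/-- Infinite paths starting in `v` consistent with the Min strategy `σ`. -/
def PlaysMin (G : Game V R) (σ : G.MinStrat) (v : V) : Type :=
  {π : ℕ → V // π 0 = v ∧ G.IsPath π ∧ G.ConsMin σ π}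

/-- Infinite paths starting in `v` consistent with the Max strategy `τ`. -/
def PlaysMax (G : Game V R) (τ : G.MaxStrat) (v : V) : Type :=
  {π : ℕ → V // π 0 = v ∧ G.IsPath π ∧ G.ConsMax τ π}

/-- The sequence of weights along an infinite path. -/
def wseq (G : Game V R) (π : ℕ → V) : ℕ → R := fun i => G.wt (π i) (π (i + 1))

/-- Embedding of `ℤ ∪ {∞}` into the extended reals. -/
noncomputable def toE (x : WithTop ℤ) : EReal :=
  if h : x = ⊤ then ⊤ else (((x.untop h : ℤ) : ℝ) : EReal)

/-- Embedding of `ℕ ∪ {∞}` into the extended reals. -/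
noncomputable def enatToE (x : ENat) : EReal :=
  if x = ⊤ then ⊤ else ((x.toNat : ℝ) : EReal)

/-- Conversion `ℤ ∪ {∞} → ℕ ∪ {∞}` (exact on non-negative values). -/
noncomputable def wToN (x : WithTop ℤ) : ENat :=
  if h : x = ⊤ then ⊤ else ((x.untop h).toNat : ENat)

/-- The mean-payoff valuation `MP(w₀w₁⋯) = limsup_k (1/k) ∑_{i<k} w_i`. -/
noncomputable def MPv (w : ℕ → ℤ) : EReal :=
  Filter.limsup
    (fun k : ℕ => ((((∑ i ∈ Finset.range k, w i : ℤ) : ℝ) / (k : ℝ) : ℝ) : EReal))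
    Filter.atTop

/-- The energy valuation `En(w₀w₁⋯) = sup_k ∑_{i<k} w_i` (weights given in `EReal`). -/
noncomputable def En (w : ℕ → EReal) : EReal :=
  ⨆ k : ℕ, ∑ i ∈ Finset.range k, w i

/-- The positive-energy valuation `En⁺(w₀w₁⋯) = ∑_{i<k¬} w_i ∈ ℕ ∪ {∞}` where `k¬` is the
first index of a negative weight (the whole, possibly infinite, sum if no weight is negative). -/
noncomputable def EnP (w : ℕ → WithTop ℤ) : ENat :=
  if h : ∃ k, w k < 0 then ∑ i ∈ Finset.range (Nat.find h), wToN (w i)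
  else ⨆ k : ℕ, ∑ i ∈ Finset.range k, wToN (w i)

/-- The mean-payoff value of a vertex:
`MP_G(v) = inf over Min strategies σ of sup over plays π from v consistent with σ of MP(w(π))`. -/
noncomputable def MPVal (G : Game V ℤ) (v : V) : EReal :=
  ⨅ σ : G.MinStrat, ⨆ π : G.PlaysMin σ v, MPv (G.wseq π.1)

/-- The energy value of a vertex. -/
noncomputable def EnVal (G : Game V (WithTop ℤ)) (v : V) : EReal :=
  ⨅ σ : G.MinStrat, ⨆ π : G.PlaysMin σ v, En (fun i => toE (G.wseq π.1 i))

/-- The positive-energy value of a vertex. -/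
noncomputable def EnPVal (G : Game V (WithTop ℤ)) (v : V) : ENat :=
  ⨅ σ : G.MinStrat, ⨆ π : G.PlaysMin σ v, EnP (G.wseq π.1)

/-- Lift a game with integer weights to a game with weights in `ℤ ∪ {∞}`. -/
def liftZ (G : Game V ℤ) : Game V (WithTop ℤ) :=
  { E := G.E, wt := fun u v => (G.wt u v : WithTop ℤ), isMin := G.isMin, nosink := G.nosink }

/-- The `φ`-modified weight: `w_φ(v,v') = w(v,v') + φ(v') − φ(v)` when `w(v,v')`, `φ(v)`, `φ(v')`
are all finite, and `∞` otherwise. -/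
noncomputable def modWt (w : V → V → WithTop ℤ) (φ : V → ENat) (u v : V) : WithTop ℤ :=
  if w u v = ⊤ ∨ φ u = ⊤ ∨ φ v = ⊤ then ⊤
  else (((w u v).untopD 0 + ((φ v).toNat : ℤ) - ((φ u).toNat : ℤ) : ℤ) : WithTop ℤ)

/-- The `φ`-modified game `G_φ`. -/
noncomputable def modify (G : Game V (WithTop ℤ)) (φ : V → ENat) : Game V (WithTop ℤ) :=
  { G with wt := modWt G.wt φ }

/-- `π 0 → π 1 → ⋯ → π k` is a simple cycle: `k ≥ 1`, consecutive edges, `π k = π 0`,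
and `π 0, …, π (k-1)` pairwise distinct. -/
def IsSimpleCycle (G : Game V R) (π : ℕ → V) (k : ℕ) : Prop :=
  1 ≤ k ∧ (∀ i < k, G.E (π i) (π (i + 1))) ∧ π k = π 0 ∧
    ∀ i < k, ∀ j < k, π i = π j → i = j

/-- A game is simple if every simple cycle has nonzero sum of weights. -/
def IsSimpleR [AddCommMonoid R] (G : Game V R) : Prop :=
  ∀ π k, IsSimpleCycle G π k → (∑ i ∈ Finset.range k, G.wt (π i) (π (i + 1))) ≠ 0

/-- `W = max_{e ∈ E} |w(e)|`. -/
noncomputable def maxW (G : Game V ℤ) [Fintype V] : ℕ :=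
  Finset.sup Finset.univ (fun p : V × V => if G.E p.1 p.2 then (G.wt p.1 p.2).natAbs else 0)

/-- The ESL iteration: `G₀ = G` and `G_{j+1} = (G_j)_{φ_j}` where `φ_j = En⁺_{G_j}`. -/
noncomputable def esl (G : Game V (WithTop ℤ)) : ℕ → Game V (WithTop ℤ)
  | 0 => G
  | j + 1 => modify (esl G j) (EnPVal (esl G j))

/-- The accumulated ESL potential `Φ_j = φ₀ + ⋯ + φ_{j−1}`. -/
noncomputable def eslPhi (G : Game V (WithTop ℤ)) (j : ℕ) (v : V) : ENat :=
  ∑ i ∈ Finset.range j, EnPVal (esl G i) v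

/-- The set of vertices from which Min can ensure to immediately visit a negative-weight edge:
Min vertices with some negative outgoing edge, and Max vertices all of whose outgoing edges
are negative. -/
def NegSet (G : Game V (WithTop ℤ)) : Set V :=
  {v | (G.isMin v ∧ ∃ u, G.E v u ∧ G.wt v u < 0) ∨
       (¬ G.isMin v ∧ ∀ u, G.E v u → G.wt v u < 0)}

end Game

open Game

namespace Game

variable {V : Type}

lemma toE_ne_bot (x : WithTop ℤ) : toE x ≠ ⊥ := by
  unfold toE; split <;> simp

lemma toE_coe (n : ℤ) : toE (n : WithTop ℤ) = ((n : ℝ) : EReal) := by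
  unfold toE
  rw [dif_neg (WithTop.coe_ne_top (a := n))]
  simp

lemma toE_top : toE (⊤ : WithTop ℤ) = ⊤ := by unfold toE; simp

lemma enatToE_nonneg (x : ENat) : 0 ≤ enatToE x := by
  unfold enatToE; split
  · exact le_top
  · exact EReal.coe_nonneg.2 (by positivity)

lemma enatToE_ne_bot (x : ENat) : enatToE x ≠ ⊥ :=
  fun h => by simpa [h] using enatToE_nonneg x

lemma enatToE_ne_top (x : ENat) (h : x ≠ ⊤) : enatToE x = ((x.toNat : ℝ) : EReal) := by
  unfold enatToE; rw [if_neg h]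

lemma enatToE_top : enatToE (⊤ : ENat) = ⊤ := by unfold enatToE; simp

lemma esum_ne_bot {ι : Type*} (s : Finset ι) (f : ι → EReal) (h : ∀ i ∈ s, f i ≠ ⊥) :
    ∑ i ∈ s, f i ≠ ⊥ := by
  classical
  induction s using Finset.cons_induction with
  | empty => simp
  | cons a s ha ih =>
    rw [Finset.sum_cons, Ne, EReal.add_eq_bot_iff]
    push_neg
    exact ⟨h a (Finset.mem_cons_self a s), ih fun i hi => h i (Finset.mem_cons_of_mem hi)⟩

lemma esum_eq_top {ι : Type*} (s : Finset ι) (f : ι → EReal) (h : ∀ i ∈ s, f i ≠ ⊥)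
    {a : ι} (ha : a ∈ s) (hatop : f a = ⊤) : ∑ i ∈ s, f i = ⊤ := by
  classical
  rw [← Finset.add_sum_erase s f ha, hatop]
  exact EReal.top_add_of_ne_bot
    (esum_ne_bot _ _ fun i hi => h i (Finset.mem_of_mem_erase hi))

lemma coe_esum {ι : Type*} (s : Finset ι) (f : ι → ℝ) :
    ((∑ i ∈ s, f i : ℝ) : EReal) = ∑ i ∈ s, ((f i : ℝ) : EReal) :=
  map_sum (⟨⟨Real.toEReal, EReal.coe_zero⟩, EReal.coe_add⟩ : ℝ →+ EReal) f s

lemma radd_iSup {ι : Sort*} [Nonempty ι] (r : ℝ) (f : ι → EReal) :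
    (r : EReal) + ⨆ i, f i = ⨆ i, ((r : EReal) + f i) := by
  refine le_antisymm ?_ (iSup_le fun i => add_le_add_right (le_iSup f i) _)
  rw [add_comm, ← EReal.le_sub_iff_add_le (Or.inl (EReal.coe_ne_bot r))
    (Or.inl (EReal.coe_ne_top r))]
  refine iSup_le fun i => ?_
  rw [EReal.le_sub_iff_add_le (Or.inl (EReal.coe_ne_bot r)) (Or.inl (EReal.coe_ne_top r)),
    add_comm]
  exact le_iSup (fun i => (r : EReal) + f i) i

lemma radd_iInf {ι : Sort*} [Nonempty ι] (r : ℝ) (f : ι → EReal) :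
    (r : EReal) + ⨅ i, f i = ⨅ i, ((r : EReal) + f i) := by
  refine le_antisymm (le_iInf fun i => add_le_add_right (iInf_le f i) _) ?_
  have h : (⨅ i, ((r : EReal) + f i)) - r ≤ ⨅ i, f i := by
    refine le_iInf fun i => ?_
    rw [EReal.sub_le_iff_le_add (Or.inl (EReal.coe_ne_bot r)) (Or.inl (EReal.coe_ne_top r)),
      add_comm]
    exact iInf_le (fun i => (r : EReal) + f i) i
  calc ⨅ i, ((r : EReal) + f i) = ((⨅ i, ((r : EReal) + f i)) - r) + r :=
        EReal.sub_add_cancel.symm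
    _ ≤ (⨅ i, f i) + r := add_le_add_left h _
    _ = (r : EReal) + ⨅ i, f i := add_comm _ _

lemma partial_le_En (w : ℕ → EReal) (k : ℕ) : ∑ i ∈ Finset.range k, w i ≤ En w :=
  le_iSup (fun k => ∑ i ∈ Finset.range k, w i) k

lemma En_nonneg (w : ℕ → EReal) : 0 ≤ En w := by
  simpa using partial_le_En w 0

end Game
namespace Game

variable {V : Type}

/-- Default successor according to a Min strategy. -/
noncomputable def dflt (G : Game V (WithTop ℤ)) (σ : G.MinStrat) (u : V) : V :=
  if G.isMin u then σ.1 u else Classical.choose (G.nosink u)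

lemma dflt_edge (G : Game V (WithTop ℤ)) (σ : G.MinStrat) (u : V) : G.E u (G.dflt σ u) := by
  unfold dflt; split
  · exact σ.2 u ‹_›
  · exact Classical.choose_spec (G.nosink u)

noncomputable def dpath (G : Game V (WithTop ℤ)) (σ : G.MinStrat) (v : V) : ℕ → V
  | 0 => v
  | n + 1 => G.dflt σ (G.dpath σ v n)

instance playsNonempty (G : Game V (WithTop ℤ)) (σ : G.MinStrat) (v : V) :
    Nonempty (G.PlaysMin σ v) := by
  refine ⟨⟨G.dpath σ v, rfl, fun i => G.dflt_edge σ _, fun i h => ?_⟩⟩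
  show G.dflt σ _ = _
  unfold dflt
  rw [if_pos h]

lemma EnVal_nonneg (G : Game V (WithTop ℤ)) (v : V) : 0 ≤ EnVal G v := by
  refine le_iInf fun σ => ?_
  obtain ⟨π⟩ := G.playsNonempty σ v
  exact le_trans (En_nonneg _) (le_iSup (fun π : G.PlaysMin σ v => En fun i => toE (G.wseq π.1 i)) π)

def appendPath (π ρ : ℕ → V) (k : ℕ) : ℕ → V :=
  fun n => if n < k then π n else ρ (n - k)

lemma append_eq_left {π ρ : ℕ → V} {k : ℕ} (h : ρ 0 = π k) {n : ℕ} (hn : n ≤ k) :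
    appendPath π ρ k n = π n := by
  unfold appendPath
  rcases lt_or_eq_of_le hn with h' | rfl
  · rw [if_pos h']
  · simp [h]

lemma append_eq_right {π ρ : ℕ → V} {k n : ℕ} (hn : k ≤ n) :
    appendPath π ρ k n = ρ (n - k) := if_neg (by omega)

lemma append_play (G : Game V (WithTop ℤ)) (σ : G.MinStrat) {v : V} {π : ℕ → V}
    (hv : π 0 = v) (hπ : G.IsPath π) (hc : G.ConsMin σ π) (k : ℕ) {ρ : ℕ → V}
    (hρ0 : ρ 0 = π k) (hρ : G.IsPath ρ) (hρc : G.ConsMin σ ρ) :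
    appendPath π ρ k 0 = v ∧ G.IsPath (appendPath π ρ k) ∧ G.ConsMin σ (appendPath π ρ k) := by
  refine ⟨by rw [append_eq_left hρ0 (Nat.zero_le k)]; exact hv, ?_, ?_⟩
  · intro i
    rcases le_or_gt k i with hk | hk
    · rw [append_eq_right hk, append_eq_right (le_trans hk (Nat.le_succ i)),
        show i + 1 - k = (i - k) + 1 by omega]
      exact hρ (i - k)
    · rw [append_eq_left hρ0 (le_of_lt hk), append_eq_left hρ0 hk]
      exact hπ i
  · intro i hmin
    rcases le_or_gt k i with hk | hk
    · rw [append_eq_right hk] at hmin ⊢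
      rw [append_eq_right (le_trans hk (Nat.le_succ i)),
        show i + 1 - k = (i - k) + 1 by omega]
      exact hρc (i - k) hmin
    · rw [append_eq_left hρ0 (le_of_lt hk)] at hmin ⊢
      rw [append_eq_left hρ0 hk]
      exact hc i hmin

lemma append_sum (G : Game V (WithTop ℤ)) (π ρ : ℕ → V) (k : ℕ) (hρ0 : ρ 0 = π k) (m : ℕ) :
    ∑ i ∈ Finset.range (k + m), toE (G.wseq (appendPath π ρ k) i)
      = (∑ i ∈ Finset.range k, toE (G.wseq π i)) + ∑ i ∈ Finset.range m, toE (G.wseq ρ i) := by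
  induction m with
  | zero =>
    simp only [Nat.add_zero, Finset.range_zero, Finset.sum_empty, add_zero]
    refine Finset.sum_congr rfl fun i hi => ?_
    rw [Finset.mem_range] at hi
    unfold wseq
    rw [append_eq_left hρ0 (le_of_lt hi), append_eq_left hρ0 hi]
  | succ m ih =>
    rw [show k + (m + 1) = (k + m) + 1 from rfl, Finset.sum_range_succ, ih,
      Finset.sum_range_succ, add_assoc]
    congr 1
    unfold wseq
    rw [append_eq_right (Nat.le_add_right k m), append_eq_right (by omega : k ≤ k + m + 1),
      Nat.add_sub_cancel_left, show k + m + 1 - k = m + 1 by omega]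

end Game
namespace Game

variable {V : Type}

/-- The original partial sum over a prefix with finite weights is a real number. -/
lemma sum_toE_eq (G : Game V (WithTop ℤ)) (π : ℕ → V) (k : ℕ)
    (hw : ∀ i < k, G.wt (π i) (π (i + 1)) ≠ ⊤) :
    ∑ i ∈ Finset.range k, toE (G.wseq π i)
      = (((∑ i ∈ Finset.range k, (G.wt (π i) (π (i + 1))).untopD 0 : ℤ) : ℝ) : EReal) := by
  rw [Int.cast_sum, coe_esum]
  refine Finset.sum_congr rfl fun i hi => ?_
  rw [Finset.mem_range] at hi
  obtain ⟨n, hn⟩ := WithTop.ne_top_iff_exists.1 (hw i hi)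
  unfold wseq
  rw [← hn, toE_coe, WithTop.untopD_coe]

/-- Telescoping identity for modified partial sums, in the all-finite case. -/
lemma mod_sum_eq (G : Game V (WithTop ℤ)) (φ : V → ENat) (π : ℕ → V) (k : ℕ)
    (hw : ∀ i < k, G.wt (π i) (π (i + 1)) ≠ ⊤) (hf : ∀ i ≤ k, φ (π i) ≠ ⊤) :
    enatToE (φ (π 0)) + ∑ i ∈ Finset.range k, toE ((modify G φ).wseq π i)
      = (∑ i ∈ Finset.range k, toE (G.wseq π i)) + enatToE (φ (π k)) := by
  set a : ℕ → ℤ := fun i => (G.wt (π i) (π (i + 1))).untopD 0 with ha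
  set b : ℕ → ℤ := fun i => ((φ (π i)).toNat : ℤ) with hb
  have h1 : ∑ i ∈ Finset.range k, toE ((modify G φ).wseq π i)
      = (((∑ i ∈ Finset.range k, (a i + b (i + 1) - b i) : ℤ) : ℝ) : EReal) := by
    rw [Int.cast_sum, coe_esum]
    refine Finset.sum_congr rfl fun i hi => ?_
    rw [Finset.mem_range] at hi
    show toE (modWt G.wt φ (π i) (π (i + 1))) = _
    unfold modWt
    rw [if_neg (by push_neg; exact ⟨hw i hi, hf i (le_of_lt hi), hf (i + 1) hi⟩), toE_coe]
  rw [h1, sum_toE_eq G π k hw, enatToE_ne_top _ (hf 0 (Nat.zero_le k)),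
    enatToE_ne_top _ (hf k le_rfl)]
  norm_cast
  have h2 : ∑ i ∈ Finset.range k, (a i + b (i + 1) - b i)
      = (∑ i ∈ Finset.range k, a i) + (b k - b 0) := by
    have := Finset.sum_range_sub b k
    have h3 : ∀ i ∈ Finset.range k, a i + b (i + 1) - b i = a i + (b (i + 1) - b i) := by
      intro i _; ring
    rw [Finset.sum_congr rfl h3, Finset.sum_add_distrib, this]
  rw [h2]; ring

/-- If some modified weight in the prefix is `⊤`, the modified energy of the path is `⊤`. -/
lemma En_eq_top_of_mem (G : Game V (WithTop ℤ)) (π : ℕ → V) {i : ℕ}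
    (h : G.wt (π i) (π (i + 1)) = ⊤) : En (fun j => toE (G.wseq π j)) = ⊤ := by
  refine top_le_iff.1 ?_
  calc (⊤ : EReal) = ∑ j ∈ Finset.range (i + 1), toE (G.wseq π j) := by
        refine (esum_eq_top _ _ (fun j _ => toE_ne_bot _)
          (Finset.self_mem_range_succ i) ?_).symm
        show toE (G.wt (π i) (π (i + 1))) = ⊤
        rw [h, toE_top]
    _ ≤ _ := partial_le_En _ _

lemma modWt_top_left (G : Game V (WithTop ℤ)) (φ : V → ENat) {u v : V} (h : φ u = ⊤) :
    modWt G.wt φ u v = ⊤ := by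
  unfold modWt; rw [if_pos (Or.inr (Or.inl h))]

lemma modWt_top_right (G : Game V (WithTop ℤ)) (φ : V → ENat) {u v : V} (h : φ v = ⊤) :
    modWt G.wt φ u v = ⊤ := by
  unfold modWt; rw [if_pos (Or.inr (Or.inr h))]

lemma modWt_top_wt (G : Game V (WithTop ℤ)) (φ : V → ENat) {u v : V} (h : G.wt u v = ⊤) :
    modWt G.wt φ u v = ⊤ := by
  unfold modWt; rw [if_pos (Or.inl h)]

end Game
namespace Game

variable {V : Type}

instance minStratNonempty (G : Game V (WithTop ℤ)) : Nonempty G.MinStrat :=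
  ⟨⟨fun v => Classical.choose (G.nosink v), fun v _ => Classical.choose_spec (G.nosink v)⟩⟩

lemma modWt_ne_top (G : Game V (WithTop ℤ)) (φ : V → ENat) {u v : V} :
    modWt G.wt φ u v ≠ ⊤ ↔ G.wt u v ≠ ⊤ ∧ φ u ≠ ⊤ ∧ φ v ≠ ⊤ := by
  unfold modWt
  split
  · simp only [ne_eq, not_true_eq_false, false_iff]
    tauto
  · next h =>
    push_neg at h
    simp only [ne_eq, WithTop.coe_ne_top, not_false_eq_true, true_iff]
    exact h

/-- KEY: if the original weights along a prefix of a consistent play are finite, then the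
prefix sum plus the potential at the endpoint is bounded by the value of the strategy. -/
lemma key (G : Game V (WithTop ℤ)) (φ : V → ENat)
    (hφ : ∀ u, enatToE (φ u) ≤ EnVal G u) (σ : G.MinStrat) {v : V} {π : ℕ → V}
    (hv : π 0 = v) (hπ : G.IsPath π) (hc : G.ConsMin σ π) (k : ℕ)
    (hw : ∀ i < k, G.wt (π i) (π (i + 1)) ≠ ⊤) :
    (∑ i ∈ Finset.range k, toE (G.wseq π i)) + enatToE (φ (π k))
      ≤ ⨆ π' : G.PlaysMin σ v, En (fun i => toE (G.wseq π'.1 i)) := by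
  set s : ℤ := ∑ i ∈ Finset.range k, (G.wt (π i) (π (i + 1))).untopD 0 with hs
  have hS : ∑ i ∈ Finset.range k, toE (G.wseq π i) = (((s : ℤ) : ℝ) : EReal) :=
    sum_toE_eq G π k hw
  have h1 : enatToE (φ (π k)) ≤ ⨆ ρ : G.PlaysMin σ (π k), En (fun i => toE (G.wseq ρ.1 i)) :=
    le_trans (hφ (π k)) (iInf_le _ σ)
  calc (∑ i ∈ Finset.range k, toE (G.wseq π i)) + enatToE (φ (π k))
      ≤ (((s : ℤ) : ℝ) : EReal)
          + ⨆ ρ : G.PlaysMin σ (π k), En (fun i => toE (G.wseq ρ.1 i)) := by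
        rw [hS]; exact add_le_add_right h1 _
    _ = ⨆ ρ : G.PlaysMin σ (π k),
          ((((s : ℤ) : ℝ) : EReal) + En (fun i => toE (G.wseq ρ.1 i))) := radd_iSup _ _
    _ ≤ ⨆ π' : G.PlaysMin σ v, En (fun i => toE (G.wseq π'.1 i)) := by
        refine iSup_le fun ρ => ?_
        obtain ⟨hρ0, hρp, hρc⟩ := ρ.2
        obtain ⟨h0, hp, hcc⟩ := G.append_play σ hv hπ hc k hρ0 hρp hρc
        have hEn : (((s : ℤ) : ℝ) : EReal) + En (fun i => toE (G.wseq ρ.1 i))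
            ≤ En (fun i => toE (G.wseq (appendPath π ρ.1 k) i)) := by
          unfold En
          rw [radd_iSup]
          refine iSup_le fun m => ?_
          calc (((s : ℤ) : ℝ) : EReal) + ∑ i ∈ Finset.range m, toE (G.wseq ρ.1 i)
              = ∑ i ∈ Finset.range (k + m), toE (G.wseq (appendPath π ρ.1 k) i) := by
                rw [G.append_sum π ρ.1 k hρ0 m, hS]
            _ ≤ _ := le_iSup
                (fun m => ∑ i ∈ Finset.range m, toE (G.wseq (appendPath π ρ.1 k) i)) (k + m)
        exact le_trans hEn
          (le_iSup (fun π' : G.PlaysMin σ v => En (fun i => toE (G.wseq π'.1 i)))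
            ⟨appendPath π ρ.1 k, h0, hp, hcc⟩)

/-- Per-path inequality for the `≤` direction. -/
lemma En_le_mod (G : Game V (WithTop ℤ)) (φ : V → ENat) {v : V} {π : ℕ → V} (hv : π 0 = v) :
    En (fun i => toE (G.wseq π i))
      ≤ enatToE (φ v) + En (fun i => toE ((modify G φ).wseq π i)) := by
  refine iSup_le fun k => ?_
  by_cases htop : ∀ i < k, modWt G.wt φ (π i) (π (i + 1)) ≠ ⊤
  · rcases Nat.eq_zero_or_pos k with rfl | hk
    · simpa using add_nonneg (enatToE_nonneg (φ v)) (En_nonneg _)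
    · have hw : ∀ i < k, G.wt (π i) (π (i + 1)) ≠ ⊤ :=
        fun i hi => ((modWt_ne_top G φ).1 (htop i hi)).1
      have hf : ∀ i ≤ k, φ (π i) ≠ ⊤ := by
        intro i hi
        rcases Nat.eq_zero_or_pos i with rfl | hi0
        · exact ((modWt_ne_top G φ).1 (htop 0 hk)).2.1
        · obtain ⟨j, rfl⟩ : ∃ j, i = j + 1 := ⟨i - 1, by omega⟩
          exact ((modWt_ne_top G φ).1 (htop j (by omega))).2.2
      have heq := mod_sum_eq G φ π k hw hf
      rw [hv] at heq
      calc ∑ i ∈ Finset.range k, toE (G.wseq π i)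
          ≤ (∑ i ∈ Finset.range k, toE (G.wseq π i)) + enatToE (φ (π k)) :=
            le_add_of_nonneg_right (enatToE_nonneg _)
        _ = enatToE (φ v) + ∑ i ∈ Finset.range k, toE ((modify G φ).wseq π i) := heq.symm
        _ ≤ enatToE (φ v) + En (fun i => toE ((modify G φ).wseq π i)) :=
            add_le_add_right (partial_le_En _ k) _
  · push_neg at htop
    obtain ⟨i, _, hi⟩ := htop
    have hEn : En (fun j => toE ((modify G φ).wseq π j)) = ⊤ :=
      En_eq_top_of_mem (modify G φ) π hi
    rw [hEn, EReal.add_top_of_ne_bot (enatToE_ne_bot _)]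
    exact le_top

lemma main_le (G : Game V (WithTop ℤ)) (φ : V → ENat) (v : V) :
    EnVal G v ≤ enatToE (φ v) + EnVal (modify G φ) v := by
  by_cases hv : φ v = ⊤
  · rw [hv, enatToE_top, EReal.top_add_of_ne_bot]
    · exact le_top
    · intro h
      have := EnVal_nonneg (modify G φ) v
      rw [h] at this
      simp at this
  · rw [enatToE_ne_top _ hv]
    rw [show EnVal (modify G φ) v = ⨅ σ : (modify G φ).MinStrat,
      ⨆ π : (modify G φ).PlaysMin σ v, En (fun i => toE ((modify G φ).wseq π.1 i)) from rfl,
      radd_iInf]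
    refine le_iInf fun σ => ?_
    refine le_trans (iInf_le
      (fun σ : G.MinStrat => ⨆ π : G.PlaysMin σ v, En (fun i => toE (G.wseq π.1 i))) σ) ?_
    refine iSup_le fun π => ?_
    have h := En_le_mod G φ (π.2.1 : π.1 0 = v)
    rw [enatToE_ne_top _ hv] at h
    refine le_trans h (add_le_add_right ?_ _)
    exact le_iSup
      (fun π' : (modify G φ).PlaysMin σ v => En (fun i => toE ((modify G φ).wseq π'.1 i))) π

lemma main_ge (G : Game V (WithTop ℤ)) (φ : V → ENat)
    (hφ : ∀ u, enatToE (φ u) ≤ EnVal G u) (v : V) :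
    enatToE (φ v) + EnVal (modify G φ) v ≤ EnVal G v := by
  refine le_iInf fun σ : G.MinStrat => ?_
  have hmod : EnVal (modify G φ) v
      ≤ ⨆ π : G.PlaysMin σ v, En (fun i => toE ((modify G φ).wseq π.1 i)) :=
    iInf_le (fun σ : (modify G φ).MinStrat =>
      ⨆ π : (modify G φ).PlaysMin σ v, En (fun i => toE ((modify G φ).wseq π.1 i))) σ
  have hstep : enatToE (φ v)
      + (⨆ π : G.PlaysMin σ v, En (fun i => toE ((modify G φ).wseq π.1 i)))
      ≤ ⨆ π : G.PlaysMin σ v, En (fun i => toE (G.wseq π.1 i)) := by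
    by_cases hv : φ v = ⊤
    · refine le_top.trans ?_
      have h1 : (⊤ : EReal) ≤ EnVal G v := by rw [← enatToE_top, ← hv]; exact hφ v
      exact h1.trans (iInf_le _ σ)
    · rw [enatToE_ne_top _ hv, radd_iSup]
      refine iSup_le fun π => ?_
      obtain ⟨h0, hp, hc⟩ := π.2
      rw [show En (fun i => toE ((modify G φ).wseq π.1 i))
        = ⨆ k, ∑ i ∈ Finset.range k, toE ((modify G φ).wseq π.1 i) from rfl, radd_iSup]
      refine iSup_le fun k => ?_
      by_cases hw : ∀ i < k, G.wt (π.1 i) (π.1 (i + 1)) ≠ ⊤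
      · by_cases hf : ∀ i ≤ k, φ (π.1 i) ≠ ⊤
        · have heq := mod_sum_eq G φ π.1 k hw hf
          have hr : enatToE (φ (π.1 0)) = (((φ v).toNat : ℝ) : EReal) := by
            rw [h0, enatToE_ne_top _ hv]
          calc (((φ v).toNat : ℝ) : EReal)
              + ∑ i ∈ Finset.range k, toE ((modify G φ).wseq π.1 i)
              = (∑ i ∈ Finset.range k, toE (G.wseq π.1 i)) + enatToE (φ (π.1 k)) := by
                rw [← hr, heq]
            _ ≤ _ := key G φ hφ σ h0 hp hc k hw
        · push_neg at hf
          obtain ⟨j, hj, hjtop⟩ := hf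
          refine le_top.trans ?_
          have hkey := key G φ hφ σ h0 hp hc j (fun i hi => hw i (lt_of_lt_of_le hi hj))
          rw [hjtop, enatToE_top] at hkey
          calc (⊤ : EReal) = (∑ i ∈ Finset.range j, toE (G.wseq π.1 i)) + ⊤ :=
                (EReal.add_top_of_ne_bot (esum_ne_bot _ _ fun i _ => toE_ne_bot _)).symm
            _ ≤ _ := hkey
      · push_neg at hw
        obtain ⟨i, _, hitop⟩ := hw
        refine le_top.trans ?_
        have hEn : En (fun j => toE (G.wseq π.1 j)) = ⊤ := En_eq_top_of_mem G π.1 hitop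
        rw [← hEn]
        exact le_iSup (fun π' : G.PlaysMin σ v => En (fun i => toE (G.wseq π'.1 i))) π
  exact le_trans (add_le_add_right hmod _) hstep

end Game

/-- Potential reduction theorem: if `φ ≤ En_G` then `En_G = φ + En_{G_φ}`. -/
theorem potential_reduction {V : Type} [Fintype V] (G : Game V (WithTop ℤ))
    (φ : V → ENat) (hφ : ∀ v, enatToE (φ v) ≤ EnVal G v) :
    ∀ v, EnVal G v = enatToE (φ v) + EnVal (modify G φ) v :=
  fun v => le_antisymm (main_le G φ v) (main_ge G φ hφ v)
end

section
/- Let G = (V, E, w, V_Min, V_Max) be a game with integer weights and n = |V|, and let G' = (V, E, w', V_Min, V_Max) be the game with weights w'(e) = (n+1)·w(e) − 1. Then G' is simple (every simple cycle of G' has nonzero sum of weights), and for every vertex v, MP_{G'}(v) > 0 if and only if MP_G(v) > 0. -/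
attribute [local instance] Classical.propDecidable

open Game
section LiftingAux

open Filter

namespace LiftAux

noncomputable def affFun (c : ℝ) (x : EReal) : EReal := x * (c : EReal) - 1

noncomputable def affInv (c : ℝ) (y : EReal) : EReal := (y + 1) * ((c⁻¹ : ℝ) : EReal)

lemma affFun_strictMono {c : ℝ} (hc : 0 < c) : StrictMono (affFun c) := by
  have h1 : (0:EReal) < ((c⁻¹ : ℝ) : EReal) := by
    exact_mod_cast EReal.coe_pos.2 (inv_pos.2 hc)
  have hmul : StrictMono (fun x : EReal => x * (c : EReal)) := by
    have h := EReal.strictMono_div_right_of_pos h1 (EReal.coe_ne_top _)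
    have heq : (fun a : EReal => a / ((c⁻¹ : ℝ) : EReal)) = fun a : EReal => a * (c : EReal) := by
      funext a
      show a * ((c⁻¹ : ℝ) : EReal)⁻¹ = a * (c : EReal)
      rw [← EReal.coe_inv, inv_inv]
    rwa [heq] at h
  intro a b hab
  have := hmul hab
  exact EReal.sub_lt_sub_of_lt_of_le this (le_refl (1:EReal)) (EReal.coe_ne_bot 1)
    (EReal.coe_ne_top 1)

lemma affFun_coe (c : ℝ) (r : ℝ) : affFun c (r : EReal) = ((r * c - 1 : ℝ) : EReal) := by
  rw [affFun, ← EReal.coe_mul, ← EReal.coe_one, ← EReal.coe_sub]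

lemma affFun_bot (c : ℝ) (hc : 0 < c) : affFun c ⊥ = ⊥ := by
  rw [affFun, EReal.bot_mul_coe_of_pos hc, EReal.bot_sub]

lemma affFun_top (c : ℝ) (hc : 0 < c) : affFun c ⊤ = ⊤ := by
  rw [affFun, EReal.top_mul_coe_of_pos hc, ← EReal.coe_one, EReal.top_sub_coe]

noncomputable def affIso (c : ℝ) (hc : 0 < c) : EReal ≃o EReal :=
  { toFun := affFun c
    invFun := affInv c
    left_inv := by
      intro x
      induction x using EReal.rec with
      | bot =>
        rw [affFun_bot c hc, affInv, EReal.bot_add, EReal.bot_mul_coe_of_pos (inv_pos.2 hc)]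
      | coe r =>
        rw [affFun_coe, affInv, ← EReal.coe_one, ← EReal.coe_add, ← EReal.coe_mul]
        norm_cast
        field_simp
        ring
      | top =>
        rw [affFun_top c hc, affInv, ← EReal.coe_one, EReal.top_add_coe, EReal.top_mul_coe_of_pos (inv_pos.2 hc)]
    right_inv := by
      intro y
      induction y using EReal.rec with
      | bot =>
        rw [affInv, EReal.bot_add, EReal.bot_mul_coe_of_pos (inv_pos.2 hc), affFun_bot c hc]
      | coe r =>
        rw [affInv, ← EReal.coe_one, ← EReal.coe_add, ← EReal.coe_mul, affFun_coe]
        norm_cast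
        field_simp
        ring
      | top =>
        rw [affInv, ← EReal.coe_one, EReal.top_add_coe, EReal.top_mul_coe_of_pos (inv_pos.2 hc), affFun_top c hc]
    map_rel_iff' := by
      intro a b
      exact (affFun_strictMono hc).le_iff_le }

end LiftAux

end LiftingAux
namespace LiftAux

open Filter

lemma affIso_apply (c : ℝ) (hc : 0 < c) (x : EReal) : affIso c hc x = affFun c x := rfl

lemma MPv_aff (c : ℤ) (hc : 0 < (c : ℝ)) (w : ℕ → ℤ) :
    MPv (fun i => c * w i - 1) = affIso (c : ℝ) hc (MPv w) := by
  unfold MPv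
  have hev : (fun k : ℕ =>
        ((((∑ i ∈ Finset.range k, (c * w i - 1) : ℤ) : ℝ) / (k : ℝ) : ℝ) : EReal))
      =ᶠ[atTop] fun k : ℕ =>
        affIso (c : ℝ) hc ((((∑ i ∈ Finset.range k, w i : ℤ) : ℝ) / (k : ℝ) : ℝ) : EReal) := by
    filter_upwards [eventually_ge_atTop 1] with k hk
    have hk0 : (k : ℝ) ≠ 0 := Nat.cast_ne_zero.2 (by omega)
    rw [affIso_apply, affFun_coe]
    apply congrArg Real.toEReal
    have hsum : (∑ i ∈ Finset.range k, (c * w i - 1)) =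
        c * (∑ i ∈ Finset.range k, w i) - k := by
      rw [Finset.sum_sub_distrib, ← Finset.mul_sum, Finset.sum_const, Finset.card_range,
        nsmul_eq_mul, mul_one]
    rw [hsum]
    push_cast
    field_simp
  rw [limsup_congr hev, ← OrderIso.limsup_apply]

lemma pos_iInf_iff {ι : Type*} [Finite ι] [Nonempty ι] (f : ι → EReal) :
    0 < ⨅ i, f i ↔ ∀ i, 0 < f i := by
  constructor
  · intro h i
    exact h.trans_le (iInf_le _ _)
  · intro h
    obtain ⟨i, hi⟩ := Finite.exists_min f
    exact (h i).trans_le (le_iInf hi)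

lemma finite_minStrat {V : Type} [Fintype V] (G : Game V ℤ) : Finite G.MinStrat := by
  unfold Game.MinStrat
  infer_instance

lemma nonempty_minStrat {V : Type} (G : Game V ℤ) : Nonempty G.MinStrat :=
  ⟨⟨fun v => Classical.choose (G.nosink v), fun v _ => Classical.choose_spec (G.nosink v)⟩⟩

lemma posVal_iff {V : Type} [Fintype V] (G : Game V ℤ) (v : V) :
    0 < MPVal G v ↔ ∀ σ : G.MinStrat, ∃ π : G.PlaysMin σ v, 0 < MPv (G.wseq π.1) := by
  have := finite_minStrat G
  have := nonempty_minStrat G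
  rw [MPVal, pos_iInf_iff]
  exact forall_congr' fun σ => lt_iSup_iff

lemma MPv_nonpos_of_bounded (w : ℕ → ℤ) (B : ℝ)
    (h : ∀ k, ((∑ i ∈ Finset.range k, w i : ℤ) : ℝ) ≤ B) : MPv w ≤ 0 := by
  set B' : ℝ := max B 0 with hB'
  have hle : (fun k : ℕ => ((((∑ i ∈ Finset.range k, w i : ℤ) : ℝ) / (k : ℝ) : ℝ) : EReal))
      ≤ᶠ[atTop] fun k : ℕ => ((B' / (k : ℝ) : ℝ) : EReal) := by
    filter_upwards [eventually_ge_atTop 1] with k hk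
    have hk0 : (0 : ℝ) < (k : ℝ) := by
      have : (0:ℕ) < k := by omega
      exact_mod_cast this
    apply EReal.coe_le_coe_iff.2
    gcongr
    exact (h k).trans (le_max_left _ _)
  have h1 : MPv w ≤ limsup (fun k : ℕ => ((B' / (k : ℝ) : ℝ) : EReal)) atTop :=
    limsup_le_limsup hle
  have h2 : limsup (fun k : ℕ => ((B' / (k : ℝ) : ℝ) : EReal)) atTop = (0 : EReal) := by
    have : Filter.Tendsto (fun k : ℕ => ((B' / (k : ℝ) : ℝ) : EReal)) atTop
        (nhds ((0 : ℝ) : EReal)) :=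
      EReal.tendsto_coe.2 (tendsto_const_div_atTop_nhds_zero_nat B')
    rw [EReal.coe_zero] at this
    exact this.limsup_eq
  exact h1.trans_eq h2

end LiftAux
namespace LiftAux

lemma path_sum_le {V : Type} [Fintype V] (w : V → V → ℤ) (Ed : V → V → Prop) (W : ℤ)
    (hW : ∀ x y, |w x y| ≤ W)
    (hcyc : ∀ (ρ : ℕ → V) (q : ℕ), 1 ≤ q → (∀ i < q, Ed (ρ i) (ρ (i+1))) → ρ q = ρ 0 →
      (∀ i < q, ∀ j < q, ρ i = ρ j → i = j) →
      (∑ i ∈ Finset.range q, w (ρ i) (ρ (i+1))) ≤ 0) :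
    ∀ (k : ℕ) (ρ : ℕ → V), (∀ i < k, Ed (ρ i) (ρ (i+1))) →
      (∑ i ∈ Finset.range k, w (ρ i) (ρ (i+1))) ≤ (Fintype.card V : ℤ) * W := by
  intro k
  induction k using Nat.strong_induction_on with
  | _ k IH =>
  intro ρ hρ
  have hW0 : 0 ≤ W := le_trans (abs_nonneg _) (hW (ρ 0) (ρ 0))
  by_cases hinj : ∀ i ≤ k, ∀ j ≤ k, ρ i = ρ j → i = j
  · have hcard : k + 1 ≤ Fintype.card V := by
      have hf : Function.Injective (fun i : Fin (k+1) => ρ i) := by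
        intro i j hij
        exact Fin.ext (hinj i (Nat.lt_succ_iff.1 i.isLt) j (Nat.lt_succ_iff.1 j.isLt) hij)
      simpa using Fintype.card_le_of_injective _ hf
    calc (∑ i ∈ Finset.range k, w (ρ i) (ρ (i+1)))
        ≤ ∑ _i ∈ Finset.range k, W := Finset.sum_le_sum fun i _ => le_of_abs_le (hW _ _)
      _ = (k : ℤ) * W := by rw [Finset.sum_const, Finset.card_range, nsmul_eq_mul]
      _ ≤ (Fintype.card V : ℤ) * W := by
          have hkc : (k : ℤ) ≤ (Fintype.card V : ℤ) := by exact_mod_cast (by omega : k ≤ Fintype.card V)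
          exact mul_le_mul_of_nonneg_right hkc hW0
  · push_neg at hinj
    obtain ⟨i, hik, j, hjk, hij, hne⟩ := hinj
    have hP : ∃ d, 1 ≤ d ∧ ∃ a, a + d ≤ k ∧ ρ a = ρ (a + d) := by
      rcases Nat.lt_or_ge i j with h | h
      · refine ⟨j - i, by omega, i, by omega, ?_⟩
        have he : i + (j - i) = j := by omega
        rw [he]; exact hij
      · have h' : j < i := by omega
        refine ⟨i - j, by omega, j, by omega, ?_⟩
        have he : j + (i - j) = i := by omega
        rw [he]; exact hij.symm
    set d := Nat.find hP with hd
    obtain ⟨hd1, a, had, heq⟩ := Nat.find_spec hP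
    have hdmin : ∀ d' < d, ¬(1 ≤ d' ∧ ∃ a, a + d' ≤ k ∧ ρ a = ρ (a + d')) :=
      fun d' hd' => Nat.find_min hP hd'
    have hsimp : ∀ i < d, ∀ j < d, (fun i => ρ (a + i)) i = (fun i => ρ (a + i)) j → i = j := by
      intro i hi j hj hij2
      simp only [] at hij2
      by_contra hne2
      rcases Nat.lt_or_ge i j with h | h
      · refine hdmin (j - i) (by omega) ⟨by omega, a + i, by omega, ?_⟩
        have he : a + i + (j - i) = a + j := by omega
        rw [he]; exact hij2
      · have h' : j < i := by omega
        refine hdmin (i - j) (by omega) ⟨by omega, a + j, by omega, ?_⟩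
        have he : a + j + (i - j) = a + i := by omega
        rw [he]; exact hij2.symm
    have hcycsum : (∑ i ∈ Finset.range d, w (ρ (a + i)) (ρ (a + i + 1))) ≤ 0 := by
      have := hcyc (fun i => ρ (a + i)) d hd1
        (fun i hi => hρ (a + i) (by omega)) heq.symm hsimp
      exact this
    set ρ' : ℕ → V := fun m => if m < a then ρ m else ρ (m + d) with hρ'def
    have hρ'lt : ∀ m, m < a → ρ' m = ρ m := fun m hm => if_pos hm
    have hρ'ge : ∀ m, a ≤ m → ρ' m = ρ (m + d) := fun m hm => if_neg (by omega)
    have hρ'le : ∀ m, m ≤ a → ρ' m = ρ m := by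
      intro m hm
      rcases Nat.lt_or_ge m a with h | h
      · exact hρ'lt m h
      · have hma : m = a := by omega
        rw [hρ'ge m h, hma, ← heq]
    have hkd : k - d < k := by omega
    have hedge' : ∀ m < k - d, Ed (ρ' m) (ρ' (m+1)) := by
      intro m hm
      rcases Nat.lt_or_ge m a with h | h
      · rw [hρ'lt m h, hρ'le (m+1) (by omega)]
        exact hρ m (by omega)
      · rw [hρ'ge m h, hρ'ge (m+1) (by omega)]
        have he : m + 1 + d = (m + d) + 1 := by omega
        rw [he]
        exact hρ (m + d) (by omega)
    have IH' := IH (k - d) hkd ρ' hedge'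
    have hf1 : ∀ m < a, w (ρ' m) (ρ' (m+1)) = w (ρ m) (ρ (m+1)) := by
      intro m hm; rw [hρ'lt m hm, hρ'le (m+1) (by omega)]
    have hf2 : ∀ m, a ≤ m → w (ρ' m) (ρ' (m+1)) = w (ρ (m+d)) (ρ (m+d+1)) := by
      intro m hm
      rw [hρ'ge m hm, hρ'ge (m+1) (by omega)]
      have he : m + 1 + d = m + d + 1 := by omega
      rw [he]
    have hadk : a ≤ k - d := by omega
    have hsplit1 : (∑ m ∈ Finset.range (k - d), w (ρ' m) (ρ' (m+1)))
        = (∑ m ∈ Finset.range a, w (ρ m) (ρ (m+1)))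
          + ∑ m ∈ Finset.Ico (a+d) k, w (ρ m) (ρ (m+1)) := by
      rw [Finset.range_eq_Ico, ← Finset.sum_Ico_consecutive _ (Nat.zero_le a) hadk]
      congr 1
      · rw [← Finset.range_eq_Ico]
        exact Finset.sum_congr rfl fun m hm => hf1 m (Finset.mem_range.1 hm)
      · have h1 : (∑ m ∈ Finset.Ico a (k-d), w (ρ' m) (ρ' (m+1)))
            = ∑ m ∈ Finset.Ico a (k-d), w (ρ (m+d)) (ρ (m+d+1)) :=
          Finset.sum_congr rfl fun m hm => hf2 m (Finset.mem_Ico.1 hm).1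
        rw [h1, Finset.sum_Ico_add' (fun m => w (ρ m) (ρ (m+1))) a (k-d) d]
        have hkk : k - d + d = k := by omega
        rw [hkk]
    have hsplit2 : (∑ m ∈ Finset.range k, w (ρ m) (ρ (m+1)))
        = ((∑ m ∈ Finset.range a, w (ρ m) (ρ (m+1)))
          + (∑ i ∈ Finset.range d, w (ρ (a+i)) (ρ (a+i+1))))
          + ∑ m ∈ Finset.Ico (a+d) k, w (ρ m) (ρ (m+1)) := by
      rw [Finset.range_eq_Ico,
        ← Finset.sum_Ico_consecutive (fun m => w (ρ m) (ρ (m+1))) (Nat.zero_le (a+d)) had,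
        ← Finset.sum_Ico_consecutive (fun m => w (ρ m) (ρ (m+1))) (Nat.zero_le a)
          (Nat.le_add_right a d), ← Finset.range_eq_Ico]
      rw [Finset.sum_Ico_eq_sum_range]
      have haa : a + d - a = d := by omega
      rw [haa]
    linarith
end LiftAux
namespace LiftAux

lemma exists_pos_simple_cycle {V : Type} [Fintype V] (w : V → V → ℤ) (π : ℕ → V)
    (hpos : 0 < MPv (fun i => w (π i) (π (i+1)))) :
    ∃ (ρ : ℕ → V) (q : ℕ), 1 ≤ q ∧ q ≤ Fintype.card V ∧
      (∀ i < q, ∃ t, π t = ρ i ∧ π (t+1) = ρ (i+1)) ∧ ρ q = ρ 0 ∧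
      1 ≤ ∑ i ∈ Finset.range q, w (ρ i) (ρ (i+1)) := by
  classical
  set Ed : V → V → Prop := fun x y => ∃ t, π t = x ∧ π (t+1) = y with hEd
  set W : ℤ := ∑ p ∈ (Finset.univ : Finset (V × V)), |w p.1 p.2| with hWdef
  have hW : ∀ x y, |w x y| ≤ W := by
    intro x y
    exact Finset.single_le_sum (f := fun p : V × V => |w p.1 p.2|)
      (fun p _ => abs_nonneg _) (Finset.mem_univ (x, y))
  by_contra hcon
  push_neg at hcon
  have hcyc : ∀ (ρ : ℕ → V) (q : ℕ), 1 ≤ q → (∀ i < q, Ed (ρ i) (ρ (i+1))) → ρ q = ρ 0 →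
      (∀ i < q, ∀ j < q, ρ i = ρ j → i = j) →
      (∑ i ∈ Finset.range q, w (ρ i) (ρ (i+1))) ≤ 0 := by
    intro ρ q hq1 hEdge hclose hdist
    have hqcard : q ≤ Fintype.card V := by
      have hf : Function.Injective (fun i : Fin q => ρ i) := by
        intro i j hij
        exact Fin.ext (hdist i i.isLt j j.isLt hij)
      simpa using Fintype.card_le_of_injective _ hf
    have := hcon ρ q hq1 hqcard hEdge hclose
    omega
  have hbound := path_sum_le w Ed W hW hcyc
  have hBnd : ∀ k, ((∑ i ∈ Finset.range k, w (π i) (π (i+1)) : ℤ) : ℝ)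
      ≤ ((Fintype.card V : ℤ) * W : ℤ) := by
    intro k
    have := hbound k π (fun i _ => ⟨i, rfl, rfl⟩)
    exact_mod_cast this
  have := MPv_nonpos_of_bounded (fun i => w (π i) (π (i+1))) _ hBnd
  exact absurd hpos (not_lt.2 this)

end LiftAux
namespace LiftAux

open Filter

lemma exists_play_ge {V : Type} [Fintype V] (G : Game V ℤ) (σ : G.MinStrat) (v : V)
    (π : G.PlaysMin σ v) (hpos : 0 < MPv (G.wseq π.1)) :
    ∃ (π' : G.PlaysMin σ v) (s q : ℤ), 1 ≤ s ∧ 1 ≤ q ∧ q ≤ (Fintype.card V : ℤ) ∧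
      (((s : ℝ) / (q : ℝ) : ℝ) : EReal) ≤ MPv (G.wseq π'.1) := by
  classical
  have hpos' : 0 < MPv (fun i => G.wt (π.1 i) (π.1 (i+1))) := hpos
  obtain ⟨ρ, q, hq1, hqn, hEd, hclose, hs1⟩ := exists_pos_simple_cycle G.wt π.1 hpos'
  obtain ⟨m, hm0, -⟩ := hEd 0 hq1
  set s : ℤ := ∑ i ∈ Finset.range q, G.wt (ρ i) (ρ (i+1)) with hsdef
  have hstep : ∀ i < q, G.E (ρ i) (ρ (i+1)) ∧ (G.isMin (ρ i) → ρ (i+1) = σ.1 (ρ i)) := by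
    intro i hi
    obtain ⟨t, ht1, ht2⟩ := hEd i hi
    constructor
    · rw [← ht1, ← ht2]; exact π.2.2.1 t
    · intro hmin
      rw [← ht1] at hmin
      rw [← ht1, ← ht2]
      exact π.2.2.2 t hmin
  have hmod : ∀ i : ℕ, (i+1) % q = (i % q + 1) % q := by
    intro i
    conv_lhs => rw [← Nat.mod_add_div i q]
    rw [Nat.add_right_comm, Nat.add_mul_mod_self_left]
  have hstep' : ∀ i : ℕ, G.E (ρ (i % q)) (ρ ((i+1) % q)) ∧
      (G.isMin (ρ (i % q)) → ρ ((i+1) % q) = σ.1 (ρ (i % q))) := by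
    intro i
    have hiq : i % q < q := Nat.mod_lt _ (by omega)
    rcases Nat.lt_or_ge (i % q + 1) q with h | h
    · have h2 : (i+1) % q = i % q + 1 := by rw [hmod, Nat.mod_eq_of_lt h]
      rw [h2]; exact hstep (i % q) hiq
    · have hqq : i % q + 1 = q := by omega
      have h2 : (i+1) % q = 0 := by rw [hmod, hqq, Nat.mod_self]
      have h3 := hstep (i % q) hiq
      rw [hqq, hclose] at h3
      rw [h2]; exact h3
  set f : ℕ → V := fun i => if i < m then π.1 i else ρ ((i - m) % q) with hfdef
  have hfle : ∀ i, i ≤ m → f i = π.1 i := by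
    intro i hi
    rcases Nat.lt_or_ge i m with h | h
    · exact if_pos h
    · have him : i = m := by omega
      subst him
      have h2 : f i = ρ ((i - i) % q) := if_neg (by omega)
      rw [h2, Nat.sub_self, Nat.zero_mod]
      exact hm0.symm
  have hfge : ∀ j : ℕ, f (m + j) = ρ (j % q) := by
    intro j
    have h2 : f (m + j) = ρ ((m + j - m) % q) := if_neg (by omega)
    rw [h2, Nat.add_sub_cancel_left]
  have hfge1 : ∀ j : ℕ, f (m + j + 1) = ρ ((j+1) % q) := by
    intro j
    have h2 : m + j + 1 = m + (j + 1) := by omega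
    rw [h2, hfge (j+1)]
  have hfpath : G.IsPath f := by
    intro i
    rcases Nat.lt_or_ge i m with h | h
    · rw [hfle i (by omega), hfle (i+1) (by omega)]
      exact π.2.2.1 i
    · obtain ⟨j, rfl⟩ : ∃ j, i = m + j := ⟨i - m, by omega⟩
      rw [hfge j, hfge1 j]
      exact (hstep' j).1
  have hfcons : G.ConsMin σ f := by
    intro i hmin
    rcases Nat.lt_or_ge i m with h | h
    · rw [hfle i (by omega)] at hmin ⊢
      rw [hfle (i+1) (by omega)]
      exact π.2.2.2 i hmin
    · obtain ⟨j, rfl⟩ : ∃ j, i = m + j := ⟨i - m, by omega⟩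
      rw [hfge j] at hmin ⊢
      rw [hfge1 j]
      exact (hstep' j).2 hmin
  have hf0 : f 0 = v := by
    rw [hfle 0 (Nat.zero_le m)]
    exact π.2.1
  set c : ℕ → ℤ := fun j => G.wt (ρ (j % q)) (ρ ((j+1) % q)) with hcdef
  have hwseq : ∀ j, G.wseq f (m + j) = c j := by
    intro j
    show G.wt (f (m + j)) (f (m + j + 1)) = _
    rw [hfge j, hfge1 j]
  have hcsum : ∑ j ∈ Finset.range q, c j = s := by
    apply Finset.sum_congr rfl
    intro j hj
    have hjq : j < q := Finset.mem_range.1 hj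
    show G.wt (ρ (j % q)) (ρ ((j+1) % q)) = G.wt (ρ j) (ρ (j+1))
    rw [Nat.mod_eq_of_lt hjq]
    rcases Nat.lt_or_ge (j+1) q with h | h
    · rw [Nat.mod_eq_of_lt h]
    · have hjj : j + 1 = q := by omega
      rw [hjj, Nat.mod_self, hclose]
  have hcper : ∀ t j, c (t * q + j) = c j := by
    intro t j
    have h1 : t * q + j = j + q * t := by ring
    have h2 : t * q + j + 1 = (j + 1) + q * t := by ring
    show G.wt (ρ ((t * q + j) % q)) (ρ ((t * q + j + 1) % q))
        = G.wt (ρ (j % q)) (ρ ((j + 1) % q))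
    rw [h2, h1, Nat.add_mul_mod_self_left, Nat.add_mul_mod_self_left]
  have hblock : ∀ t, ∑ j ∈ Finset.range (t * q), c j = t * s := by
    intro t
    induction t with
    | zero => simp
    | succ t ih =>
      have h1 : (t+1) * q = t * q + q := by ring
      rw [h1, Finset.sum_range_add, ih]
      have h2 : ∑ x ∈ Finset.range q, c (t * q + x) = s := by
        rw [Finset.sum_congr rfl fun x _ => hcper t x, hcsum]
      rw [h2]
      push_cast
      ring
  set C : ℤ := ∑ i ∈ Finset.range m, G.wseq f i with hCdef
  have hpartial : ∀ t, ∑ i ∈ Finset.range (m + t * q), G.wseq f i = C + t * s := by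
    intro t
    rw [Finset.sum_range_add]
    have h2 : ∑ x ∈ Finset.range (t * q), G.wseq f (m + x) = t * s := by
      rw [Finset.sum_congr rfl fun x _ => hwseq x, hblock t]
    rw [h2]
  have hq0R : (0:ℝ) < (q:ℝ) := by exact_mod_cast (by omega : 0 < q)
  have htend : Filter.Tendsto (fun t : ℕ => (((C + t * s : ℤ) : ℝ) / ((m + t * q : ℕ) : ℝ)))
      Filter.atTop (nhds ((s:ℝ) / (q:ℝ))) := by
    have hnum : Filter.Tendsto (fun t : ℕ => (C:ℝ)/(t:ℝ) + (s:ℝ)) atTop (nhds ((0:ℝ) + s)) :=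
      (tendsto_const_div_atTop_nhds_zero_nat _).add tendsto_const_nhds
    have hden : Filter.Tendsto (fun t : ℕ => (m:ℝ)/(t:ℝ) + (q:ℝ)) atTop (nhds ((0:ℝ) + q)) :=
      (tendsto_const_div_atTop_nhds_zero_nat _).add tendsto_const_nhds
    rw [zero_add] at hnum hden
    have h1 := hnum.div hden (ne_of_gt hq0R)
    apply h1.congr'
    filter_upwards [Filter.eventually_ge_atTop 1] with t ht
    have ht0 : (t:ℝ) ≠ 0 := Nat.cast_ne_zero.2 (by omega)
    have hden0 : (m:ℝ) + (t:ℝ) * (q:ℝ) > 0 := by positivity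
    rw [Pi.div_apply]
    push_cast
    field_simp
  have hφ : Filter.Tendsto (fun t : ℕ => m + t * q) Filter.atTop Filter.atTop := by
    apply Filter.tendsto_atTop_mono (fun t => ?_) Filter.tendsto_id
    calc t = t * 1 := by omega
      _ ≤ t * q := Nat.mul_le_mul (le_refl t) hq1
      _ ≤ m + t * q := Nat.le_add_left _ _
  set u : ℕ → EReal :=
    fun k => ((((∑ i ∈ Finset.range k, G.wseq f i : ℤ) : ℝ) / (k:ℝ) : ℝ) : EReal) with hu
  have hfun : (fun t : ℕ => u (m + t * q)) = fun t : ℕ =>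
      ((((C + t * s : ℤ) : ℝ) / ((m + t * q : ℕ) : ℝ) : ℝ) : EReal) := by
    funext t
    simp only [hu]
    rw [hpartial t]
  have hcomp : Filter.Tendsto (fun t : ℕ => u (m + t * q)) Filter.atTop
      (nhds (((s:ℝ)/(q:ℝ) : ℝ) : EReal)) := by
    rw [hfun]
    exact EReal.tendsto_coe.2 htend
  have hlims : (((s:ℝ)/(q:ℝ) : ℝ) : EReal) ≤ MPv (G.wseq f) := by
    calc (((s:ℝ)/(q:ℝ) : ℝ) : EReal)
        = Filter.limsup (u ∘ (fun t : ℕ => m + t * q)) Filter.atTop := hcomp.limsup_eq.symm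
      _ = Filter.limsup u (Filter.map (fun t : ℕ => m + t * q) Filter.atTop) :=
          Filter.limsup_comp u _ _
      _ ≤ Filter.limsup u Filter.atTop := Filter.limsup_le_limsup_of_le hφ
  refine ⟨⟨f, hf0, hfpath, hfcons⟩, s, (q:ℤ), hs1, by exact_mod_cast hq1, by exact_mod_cast hqn, ?_⟩
  have hqcast : ((q:ℤ):ℝ) = (q:ℝ) := by push_cast; rfl
  rw [hqcast]
  exact hlims

end LiftAux
namespace LiftAux

lemma per_sigma {V : Type} [Fintype V] (G : Game V ℤ) (σ : G.MinStrat) (v : V) :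
    (∃ π : G.PlaysMin σ v,
        0 < MPv (fun i => ((Fintype.card V : ℤ) + 1) * G.wt (π.1 i) (π.1 (i+1)) - 1))
      ↔ ∃ π : G.PlaysMin σ v, 0 < MPv (G.wseq π.1) := by
  set c : ℤ := (Fintype.card V : ℤ) + 1 with hc
  have hcR : (0:ℝ) < (c:ℝ) := by
    have : (0:ℤ) < c := by positivity
    exact_mod_cast this
  constructor
  · rintro ⟨π, h⟩
    refine ⟨π, ?_⟩
    have h' : (0:EReal) < affIso (c:ℝ) hcR (MPv (G.wseq π.1)) := by
      rw [← MPv_aff c hcR (G.wseq π.1)]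
      exact h
    by_contra hle
    push_neg at hle
    have hmono := (affIso (c:ℝ) hcR).monotone hle
    have h0 : affIso (c:ℝ) hcR ((0:ℝ):EReal) = ((0 * c - 1 : ℝ):EReal) := by
      rw [affIso_apply, affFun_coe]
    have hneg : ((0 * c - 1 : ℝ):EReal) < (0:EReal) := by
      rw [← EReal.coe_zero]
      apply EReal.coe_lt_coe_iff.2
      nlinarith
    have : affIso (c:ℝ) hcR (MPv (G.wseq π.1)) < 0 := by
      apply lt_of_le_of_lt _ hneg
      rw [← h0]
      exact (affIso (c:ℝ) hcR).monotone (by exact_mod_cast hle)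
    exact absurd h' (not_lt.2 (le_of_lt this))
  · rintro ⟨π, h⟩
    obtain ⟨π', s, qz, hs, hq1, hqn, hge⟩ := exists_play_ge G σ v π h
    refine ⟨π', ?_⟩
    have hq0R : (0:ℝ) < (qz:ℝ) := by exact_mod_cast lt_of_lt_of_le one_pos hq1
    have hZ : qz < s * c := by
      have h1 : 1 * c ≤ s * c := mul_le_mul_of_nonneg_right hs (by positivity)
      have h2 : qz ≤ (Fintype.card V : ℤ) := hqn
      omega
    have hpos1 : (0:ℝ) < (s:ℝ)/(qz:ℝ) * (c:ℝ) - 1 := by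
      rw [sub_pos, div_mul_eq_mul_div, lt_div_iff₀ hq0R]
      rw [one_mul]
      exact_mod_cast hZ
    have hfirst : (0:EReal) < affIso (c:ℝ) hcR (((s:ℝ)/(qz:ℝ) : ℝ) : EReal) := by
      rw [affIso_apply, affFun_coe, ← EReal.coe_zero]
      exact EReal.coe_lt_coe_iff.2 hpos1
    have hmain : (0:EReal) < MPv (fun i => c * G.wseq π'.1 i - 1) := by
      rw [MPv_aff c hcR (G.wseq π'.1)]
      exact lt_of_lt_of_le hfirst ((affIso (c:ℝ) hcR).monotone hge)
    exact hmain

end LiftAux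

open LiftAux in
/-- Reduction to a simple game: the game with weights `(n+1)·w − 1` is simple and has the same
vertices of positive mean-payoff value. -/
theorem lifting_simplicity {V : Type} [Fintype V] (G G' : Game V ℤ)
    (hG' : G' = { G with wt := fun u v => ((Fintype.card V : ℤ) + 1) * G.wt u v - 1 }) :
    IsSimpleR G' ∧ ∀ v : V, (0 < MPVal G' v ↔ 0 < MPVal G v) := by
  subst hG'
  constructor
  · intro ρ k hcyc h0
    obtain ⟨hk1, hE, hclose, hdist⟩ := hcyc
    have hsum : ∑ i ∈ Finset.range k,
        (((Fintype.card V : ℤ)+1) * G.wt (ρ i) (ρ (i+1)) - 1) = 0 := h0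
    have hkcard : k ≤ Fintype.card V := by
      have hf : Function.Injective (fun i : Fin k => ρ i) :=
        fun i j hij => Fin.ext (hdist i i.isLt j j.isLt hij)
      simpa using Fintype.card_le_of_injective _ hf
    set S := ∑ i ∈ Finset.range k, G.wt (ρ i) (ρ (i+1)) with hS
    have hs2 : ((Fintype.card V : ℤ)+1) * S - k = 0 := by
      rw [← hsum, Finset.sum_sub_distrib, ← Finset.mul_sum, Finset.sum_const,
        Finset.card_range, nsmul_eq_mul, mul_one]
    have hkc : (k:ℤ) ≤ (Fintype.card V:ℤ) := by exact_mod_cast hkcard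
    have hk1' : (1:ℤ) ≤ (k:ℤ) := by exact_mod_cast hk1
    rcases le_or_gt S 0 with h | h
    · have hP : ((Fintype.card V:ℤ)+1) * S ≤ 0 :=
        mul_nonpos_of_nonneg_of_nonpos (by positivity) h
      linarith
    · have h1 : (1:ℤ) ≤ S := h
      have hP : ((Fintype.card V:ℤ)+1) * 1 ≤ ((Fintype.card V:ℤ)+1) * S :=
        mul_le_mul_of_nonneg_left h1 (by positivity)
      linarith
  · intro v
    rw [posVal_iff, posVal_iff]
    constructor
    · intro h σ
      exact (per_sigma G σ v).1 (h σ)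
    · intro h σ
      exact (per_sigma G σ v).2 (h σ)
end

section
/- In every game G with integer weights and n = |V| vertices, every vertex v with positive mean-payoff value satisfies MP_G(v) ≥ 1/n. -/
attribute [local instance] Classical.propDecidable

open Game


section Aux
open Filter

lemma limsup_ge_of_tendsto_comp {f : ℕ → EReal} {φ : ℕ → ℕ}
    (hφ : Tendsto φ atTop atTop) {a : EReal}
    (ha : Tendsto (f ∘ φ) atTop (nhds a)) : a ≤ limsup f atTop := by
  rw [← ha.limsup_eq, limsup_comp]
  exact limsup_le_limsup_of_le hφ

lemma tendsto_frac (c s p L : ℝ) (hL : 0 < L) :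
    Tendsto (fun m : ℕ => (c + m * s) / (p + m * L)) atTop (nhds (s / L)) := by
  have hc : Tendsto (fun m : ℕ => c / m) atTop (nhds 0) := tendsto_const_div_atTop_nhds_zero_nat c
  have hp : Tendsto (fun m : ℕ => p / m) atTop (nhds 0) := tendsto_const_div_atTop_nhds_zero_nat p
  have hnum : Tendsto (fun m : ℕ => c / m + s) atTop (nhds s) := by
    simpa using hc.add tendsto_const_nhds
  have hden : Tendsto (fun m : ℕ => p / m + L) atTop (nhds L) := by
    simpa using hp.add tendsto_const_nhds
  have h1 : Tendsto (fun m : ℕ => (c / m + s) / (p / m + L)) atTop (nhds (s / L)) := by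
    exact hnum.div hden hL.ne'
  apply h1.congr'
  filter_upwards [eventually_ge_atTop 1] with m hm
  have hm0 : (m : ℝ) ≠ 0 := by
    have : (1:ℝ) ≤ m := by exact_mod_cast hm
    linarith
  rw [div_add' _ _ _ hm0, div_add' _ _ _ hm0, div_div_div_cancel_right₀]
  · ring_nf
  · exact hm0


lemma limsup_le_zero_of_bdd (S : ℕ → ℤ) (B : ℝ)
    (hS : ∀ k, ((S k : ℝ)) ≤ B) :
    limsup (fun k : ℕ => ((((S k : ℤ) : ℝ) / (k : ℝ) : ℝ) : EReal)) atTop ≤ 0 := by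
  have h2 : Tendsto (fun k : ℕ => (((B / (k : ℝ)) : ℝ) : EReal)) atTop (nhds (0 : EReal)) := by
    have := EReal.tendsto_coe.mpr (tendsto_const_div_atTop_nhds_zero_nat B)
    simpa using this
  have h1 : ∀ k : ℕ, ((((S k : ℤ) : ℝ) / (k : ℝ) : ℝ) : EReal) ≤ (((B / (k : ℝ)) : ℝ) : EReal) := by
    intro k
    rw [EReal.coe_le_coe_iff]
    rcases Nat.eq_zero_or_pos k with hk | hk
    · simp [hk]
    · exact div_le_div_of_nonneg_right (hS k) (by exact_mod_cast hk.le)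
  calc limsup (fun k : ℕ => ((((S k : ℤ) : ℝ) / (k : ℝ) : ℝ) : EReal)) atTop
      ≤ limsup (fun k : ℕ => (((B / (k : ℝ)) : ℝ) : EReal)) atTop :=
        limsup_le_limsup (Eventually.of_forall h1)
    _ = 0 := h2.limsup_eq


lemma walk_bound {V : Type} [Fintype V] (E' : V → V → Prop) (wt : V → V → ℤ) (W : ℤ)
    (hW : 0 ≤ W) (hwt : ∀ u w, E' u w → wt u w ≤ W) (v : V)
    (Hc : ∀ (c : ℕ → V) (L : ℕ), 1 ≤ L → (∀ r < L, E' (c r) (c (r + 1))) → c L = c 0 →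
      (∀ a < L, ∀ b < L, c a = c b → a = b) →
      (∃ (q : ℕ → V) (p : ℕ), q 0 = v ∧ q p = c 0 ∧ ∀ i < p, E' (q i) (q (i + 1))) →
      ∑ r ∈ Finset.range L, wt (c r) (c (r + 1)) ≤ 0) :
    ∀ k (π : ℕ → V), π 0 = v → (∀ i < k, E' (π i) (π (i + 1))) →
      ∑ i ∈ Finset.range k, wt (π i) (π (i + 1)) ≤ (Fintype.card V : ℤ) * W := by
  intro k
  induction k using Nat.strong_induction_on with
  | _ k IH =>
  intro π h0 hE
  set n := Fintype.card V with hn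
  by_cases hk : k ≤ n
  · calc ∑ i ∈ Finset.range k, wt (π i) (π (i + 1))
        ≤ ∑ _i ∈ Finset.range k, W :=
          Finset.sum_le_sum (fun i hi => hwt _ _ (hE i (Finset.mem_range.mp hi)))
      _ = (k : ℤ) * W := by simp [mul_comm]
      _ ≤ (n : ℤ) * W := by
          apply mul_le_mul_of_nonneg_right _ hW
          exact_mod_cast hk
  · push_neg at hk
    -- pigeonhole among π 0 .. π n
    have hrep : ∃ j, j ≤ n ∧ ∃ i < j, π i = π j := by
      obtain ⟨x, y, hxy, hfe⟩ :=
        Fintype.exists_ne_map_eq_of_card_lt (fun x : Fin (n + 1) => π x) (by simp [hn])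
      rcases lt_or_gt_of_ne (fun h => hxy (Fin.ext h) : (x : ℕ) ≠ y) with h | h
      · exact ⟨y, Nat.lt_succ_iff.mp y.isLt, x, h, hfe⟩
      · exact ⟨x, Nat.lt_succ_iff.mp x.isLt, y, h, hfe.symm⟩
    classical
    set J := Nat.find hrep with hJdef
    obtain ⟨hJn, i, hiJ, hπiJ⟩ := Nat.find_spec hrep
    have hinj : ∀ a < J, ∀ b < J, π a = π b → a = b := by
      intro a ha b hb hab
      by_contra hne
      rcases lt_or_gt_of_ne hne with h | h
      · exact Nat.find_min hrep hb ⟨le_trans hb.le hJn, a, h, hab⟩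
      · exact Nat.find_min hrep ha ⟨le_trans ha.le hJn, b, h, hab.symm⟩
    set L := J - i with hLdef
    have hL1 : 1 ≤ L := Nat.le_sub_of_add_le (by omega)
    have hiL : i + L = J := by omega
    have hJk : J < k := lt_of_le_of_lt hJn hk
    have hLk : L ≤ k := by omega
    -- the extracted simple cycle
    set c : ℕ → V := fun r => π (i + r) with hcdef
    have hcyc : ∑ r ∈ Finset.range L, wt (c r) (c (r + 1)) ≤ 0 := by
      apply Hc c L hL1
      · intro r hr
        have : E' (π (i + r)) (π (i + r + 1)) := hE (i + r) (by omega)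
        simpa [hcdef, Nat.add_assoc] using this
      · show π (i + L) = π (i + 0)
        rw [hiL]; simpa using hπiJ.symm
      · intro a ha b hb hab
        have := hinj (i + a) (by omega) (i + b) (by omega) hab
        omega
      · exact ⟨π, i, h0, rfl, fun m hm => hE m (by omega)⟩
    have hcyc' : ∑ m ∈ Finset.Ico i J, wt (π m) (π (m + 1)) ≤ 0 := by
      rw [Finset.sum_Ico_eq_sum_range]
      have : ∀ m ∈ Finset.range (J - i), wt (π (i + m)) (π (i + m + 1)) = wt (c m) (c (m + 1)) := by
        intro m _; simp [hcdef, Nat.add_assoc]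
      rw [Finset.sum_congr rfl this]
      exact hcyc
    -- splice out the cycle
    set π' : ℕ → V := fun m => if m < i then π m else π (m + L) with hπ'def
    have hπ'le : ∀ m ≤ i, π' m = π m := by
      intro m hm
      rcases lt_or_eq_of_le hm with h | h
      · simp [hπ'def, h]
      · subst h; simp only [hπ'def, lt_irrefl, if_neg (lt_irrefl m)]
        rw [hiL]; exact hπiJ.symm
    have h0' : π' 0 = v := by rw [hπ'le 0 (Nat.zero_le i), h0]
    have hE' : ∀ m < k - L, E' (π' m) (π' (m + 1)) := by
      intro m hm
      by_cases hmi : m + 1 ≤ i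
      · rw [hπ'le m (by omega), hπ'le (m + 1) hmi]
        exact hE m (by omega)
      · by_cases hmi2 : m < i
        · have hm1 : m + 1 = i := by omega
          rw [hπ'le m (by omega), hπ'le (m + 1) (by omega)]
          exact hE m (by omega)
        · have e1 : π' m = π (m + L) := by simp [hπ'def, hmi2]
          have e2 : π' (m + 1) = π (m + 1 + L) := by
            simp only [hπ'def, if_neg (by omega : ¬ (m + 1 < i))]
          rw [e1, e2]
          have : E' (π (m + L)) (π (m + L + 1)) := hE (m + L) (by omega)
          simpa [show m + 1 + L = m + L + 1 by omega] using this
    have hIH := IH (k - L) (by omega) π' h0' hE'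
    -- relate the sums
    have hsum1 : ∀ m < i, wt (π' m) (π' (m + 1)) = wt (π m) (π (m + 1)) := by
      intro m hm; rw [hπ'le m (by omega), hπ'le (m + 1) (by omega)]
    have hsum2 : ∀ m, i ≤ m → wt (π' m) (π' (m + 1)) = wt (π (m + L)) (π (m + L + 1)) := by
      intro m hm
      have e1 : π' m = π (m + L) := by simp [hπ'def, not_lt.mpr hm]
      have e2 : π' (m + 1) = π (m + 1 + L) := by
        simp only [hπ'def, if_neg (by omega : ¬ (m + 1 < i))]
      rw [e1, e2, show m + 1 + L = m + L + 1 by omega]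
    have hik : i ≤ k - L := by omega
    have hsplit : ∑ m ∈ Finset.range (k - L), wt (π' m) (π' (m + 1))
        = ∑ m ∈ Finset.range i, wt (π m) (π (m + 1)) + ∑ m ∈ Finset.Ico J k, wt (π m) (π (m + 1)) := by
      rw [Finset.range_eq_Ico, ← Finset.sum_Ico_consecutive _ (Nat.zero_le i) hik]
      congr 1
      · rw [← Finset.range_eq_Ico]
        exact Finset.sum_congr rfl (fun m hm => hsum1 m (Finset.mem_range.mp hm))
      · rw [Finset.sum_congr rfl (fun m hm => hsum2 m (Finset.mem_Ico.mp hm).1)]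
        have := Finset.sum_Ico_add (fun m => wt (π m) (π (m + 1))) i (k - L) L
        rw [show i + L = J by omega, show k - L + L = k by omega] at this
        rw [← this]
        exact Finset.sum_congr rfl (fun m _ => by rw [Nat.add_comm L m])
    have htot : ∑ m ∈ Finset.range k, wt (π m) (π (m + 1))
        = ∑ m ∈ Finset.range i, wt (π m) (π (m + 1))
          + ∑ m ∈ Finset.Ico i J, wt (π m) (π (m + 1))
          + ∑ m ∈ Finset.Ico J k, wt (π m) (π (m + 1)) := by
      rw [Finset.range_eq_Ico, ← Finset.sum_Ico_consecutive _ (Nat.zero_le J) hJk.le,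
        ← Finset.sum_Ico_consecutive _ (Nat.zero_le i) hiJ.le, ← Finset.range_eq_Ico]
    rw [htot]
    have := hsplit ▸ hIH
    omega

end Aux

/-- Positive mean-payoff values are at least `1/n`. -/
theorem mp_positive_lower_bound {V : Type} [Fintype V] (G : Game V ℤ) (v : V)
    (h : 0 < MPVal G v) :
    ((((Fintype.card V : ℝ))⁻¹ : ℝ) : EReal) ≤ MPVal G v := by
  have hn0 : 0 < Fintype.card V := Fintype.card_pos_iff.mpr ⟨v⟩
  rw [MPVal]
  apply le_iInf
  intro σ
  have hσ : (0 : EReal) < ⨆ π : G.PlaysMin σ v, MPv (G.wseq π.1) :=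
    lt_of_lt_of_le h (iInf_le _ σ)
  set n := Fintype.card V with hn
  set E' : V → V → Prop := fun u w => G.E u w ∧ (G.isMin u → w = σ.1 u) with hE'def
  by_cases hP : ∃ (c : ℕ → V) (L : ℕ), 1 ≤ L ∧ (∀ r < L, E' (c r) (c (r + 1))) ∧ c L = c 0 ∧
      (∀ a < L, ∀ b < L, c a = c b → a = b) ∧
      (∃ (q : ℕ → V) (p : ℕ), q 0 = v ∧ q p = c 0 ∧ ∀ i < p, E' (q i) (q (i + 1))) ∧
      1 ≤ ∑ r ∈ Finset.range L, G.wt (c r) (c (r + 1))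
  · obtain ⟨c, L, hL1, hcE, hcL, hcinj, ⟨q, p, hq0, hqp, hqE⟩, hs⟩ := hP
    have hL0 : 0 < L := hL1
    set s : ℤ := ∑ r ∈ Finset.range L, G.wt (c r) (c (r + 1)) with hsdef
    have hcmod : ∀ a < L, c ((a + 1) % L) = c (a + 1) := by
      intro a ha
      rcases lt_or_eq_of_le (Nat.succ_le_of_lt ha) with h | h
      · rw [Nat.mod_eq_of_lt h]
      · have h' : a + 1 = L := h
        rw [h', Nat.mod_self]; exact hcL.symm
    -- the play: prefix q then loop around c
    set ρ : ℕ → V := fun i => if i < p then q i else c ((i - p) % L) with hρdef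
    have hρle : ∀ m ≤ p, ρ m = q m := by
      intro m hm
      rcases lt_or_eq_of_le hm with h | h
      · simp [hρdef, h]
      · subst h; simp [hρdef, Nat.sub_self, Nat.zero_mod, hqp.symm]
    have hρp : ∀ r, ρ (p + r) = c (r % L) := by
      intro r
      simp [hρdef, Nat.add_sub_cancel_left, (by omega : ¬ (p + r < p))]
    have hρE : ∀ i, E' (ρ i) (ρ (i + 1)) := by
      intro i
      by_cases hip : i < p
      · rw [hρle i hip.le, hρle (i + 1) hip]
        exact hqE i hip
      · push_neg at hip
        obtain ⟨r, rfl⟩ : ∃ r, i = p + r := ⟨i - p, by omega⟩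
        set a := r % L with hadef
        have ha : a < L := Nat.mod_lt _ hL0
        have e1 : ρ (p + r) = c a := hρp r
        have e2 : ρ (p + r + 1) = c (a + 1) := by
          rw [show p + r + 1 = p + (r + 1) by ring, hρp (r + 1)]
          have hmodeq : (r + 1) % L = (a + 1) % L :=
            (Nat.ModEq.add_right 1 (Nat.mod_modEq r L)).symm ▸ rfl
          rw [show (r + 1) % L = (a + 1) % L from
            Nat.ModEq.add_right 1 ((Nat.mod_modEq r L).symm), hcmod a ha]
        rw [e1, e2]
        exact hcE a ha
    have hρ0 : ρ 0 = v := by rw [hρle 0 (Nat.zero_le p), hq0]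
    have hpath : G.IsPath ρ := fun i => (hρE i).1
    have hcons : G.ConsMin σ ρ := fun i hm => (hρE i).2 hm
    set play : G.PlaysMin σ v := ⟨ρ, hρ0, hpath, hcons⟩ with hplaydef
    -- partial sums along the play
    set t : ℕ → ℤ := fun i => G.wt (ρ i) (ρ (i + 1)) with htdef
    set Pre : ℤ := ∑ i ∈ Finset.range p, t i with hPredef
    have hblock : ∀ m, ∀ r < L, t (p + m * L + r) = G.wt (c r) (c (r + 1)) := by
      intro m r hr
      have e1 : ρ (p + m * L + r) = c r := by
        rw [show p + m * L + r = p + (m * L + r) by ring, hρp,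
          Nat.mul_add_mod', Nat.mod_eq_of_lt hr]
      have e2 : ρ (p + m * L + r + 1) = c (r + 1) := by
        rw [show p + m * L + r + 1 = p + (m * L + (r + 1)) by ring, hρp,
          Nat.mul_add_mod', hcmod r hr]
      rw [htdef]; simp only []
      rw [e1, e2]
    have hsum : ∀ m, ∑ i ∈ Finset.range (p + m * L), t i = Pre + m * s := by
      intro m
      induction m with
      | zero => simp [hPredef]
      | succ m ih =>
        rw [show p + (m + 1) * L = (p + m * L) + L by ring, Finset.sum_range_add, ih]
        have : ∑ x ∈ Finset.range L, t (p + m * L + x) = s := by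
          rw [hsdef]
          exact Finset.sum_congr rfl (fun r hr => hblock m r (Finset.mem_range.mp hr))
        rw [this]; push_cast; ring
    -- the subsequence of averages tends to s / L
    have hφ : Filter.Tendsto (fun m : ℕ => p + m * L) Filter.atTop Filter.atTop := by
      apply Filter.tendsto_atTop_mono (fun m => ?_) Filter.tendsto_id
      have : m ≤ m * L := Nat.le_mul_of_pos_right m hL0
      simp only [id_eq]
      omega
    have hg : Filter.Tendsto (fun m : ℕ => (((Pre : ℝ) + m * (s : ℝ)) / ((p : ℝ) + m * (L : ℝ))))
        Filter.atTop (nhds ((s : ℝ) / (L : ℝ))) :=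
      tendsto_frac _ _ _ _ (by exact_mod_cast hL0)
    have hcomp : Filter.Tendsto
        ((fun k : ℕ => ((((∑ i ∈ Finset.range k, G.wseq ρ i : ℤ) : ℝ) / (k : ℝ) : ℝ) : EReal))
          ∘ (fun m : ℕ => p + m * L))
        Filter.atTop (nhds ((((s : ℝ) / (L : ℝ) : ℝ)) : EReal)) := by
      apply Filter.Tendsto.congr _ (EReal.tendsto_coe.mpr hg)
      intro m
      have hws : ∑ i ∈ Finset.range (p + m * L), G.wseq ρ i = Pre + m * s := hsum m
      simp only [Function.comp]
      rw [hws]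
      norm_cast
    have hkey : ((((s : ℝ) / (L : ℝ) : ℝ)) : EReal) ≤ MPv (G.wseq ρ) := by
      rw [MPv]
      exact limsup_ge_of_tendsto_comp hφ hcomp
    have hLn : L ≤ n := by
      have : Function.Injective (fun r : Fin L => c r) := by
        intro a b hab
        exact Fin.ext (hcinj a a.isLt b b.isLt hab)
      simpa [hn] using Fintype.card_le_of_injective _ this
    have hfinal : (((n : ℝ)⁻¹ : ℝ) : EReal) ≤ ((((s : ℝ) / (L : ℝ) : ℝ)) : EReal) := by
      rw [EReal.coe_le_coe_iff, inv_eq_one_div]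
      have h1s : (1 : ℝ) ≤ (s : ℝ) := by exact_mod_cast hs
      have hLn' : (L : ℝ) ≤ (n : ℝ) := by exact_mod_cast hLn
      have hL0' : (0 : ℝ) < (L : ℝ) := by exact_mod_cast hL0
      exact div_le_div₀ (by linarith) h1s hL0' hLn' 
    calc (((n : ℝ)⁻¹ : ℝ) : EReal) ≤ ((((s : ℝ) / (L : ℝ) : ℝ)) : EReal) := hfinal
      _ ≤ MPv (G.wseq play.1) := hkey
      _ ≤ ⨆ π : G.PlaysMin σ v, MPv (G.wseq π.1) := le_iSup (fun π : G.PlaysMin σ v => MPv (G.wseq π.1)) play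
  · -- no positive reachable cycle: derive a contradiction with hσ
    exfalso
    push_neg at hP
    set W : ℤ := (maxW G : ℤ) with hWdef
    have hW : 0 ≤ W := Int.natCast_nonneg _
    have hwt : ∀ u w, E' u w → G.wt u w ≤ W := by
      intro u w hE
      have h1 : (G.wt u w).natAbs ≤ maxW G := by
        have := Finset.le_sup (f := fun p : V × V => if G.E p.1 p.2 then (G.wt p.1 p.2).natAbs else 0)
          (Finset.mem_univ (u, w))
        simpa [maxW, if_pos hE.1] using this
      calc G.wt u w ≤ ((G.wt u w).natAbs : ℤ) := Int.le_natAbs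
        _ ≤ W := by rw [hWdef]; exact_mod_cast h1
    have hbound : ∀ (π : G.PlaysMin σ v), MPv (G.wseq π.1) ≤ 0 := by
      intro π
      obtain ⟨π, h0, hpath, hcons⟩ := π
      have hE : ∀ i, E' (π i) (π (i + 1)) := fun i => ⟨hpath i, fun hm => hcons i hm⟩
      have hS : ∀ k, ∑ i ∈ Finset.range k, G.wt (π i) (π (i + 1)) ≤ (n : ℤ) * W := by
        intro k
        apply walk_bound E' G.wt W hW hwt v _ k π h0 (fun i _ => hE i)
        intro c L hL hcE hcL hcinj hreach
        by_contra hpos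
        have := hP c L hL hcE hcL hcinj hreach
        omega
      have : MPv (G.wseq π) ≤ 0 := by
        rw [MPv]
        have := limsup_le_zero_of_bdd (fun k => ∑ i ∈ Finset.range k, G.wseq π i)
          ((n : ℝ) * (W : ℝ)) (by
            intro k
            have := hS k
            have : ((∑ i ∈ Finset.range k, G.wt (π i) (π (i + 1)) : ℤ) : ℝ) ≤ ((n : ℤ) * W : ℤ) := by
              exact_mod_cast this
            simpa [Game.wseq] using this)
        simpa using this
      exact this
    have : (⨆ π : G.PlaysMin σ v, MPv (G.wseq π.1)) ≤ 0 := iSup_le hbound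
    exact absurd (lt_of_lt_of_le hσ this) (lt_irrefl 0)
end

section
/- Let G be a game with weights in ℤ ∪ {∞} and let G' = G_{En⁺_G} be the game obtained by the potential reduction with respect to the potential En⁺_G. Let N (respectively N') be the set of vertices from which Min can ensure to immediately visit an edge of negative weight in G (respectively in G'). Then N' ⊆ N. -/
attribute [local instance] Classical.propDecidable

namespace Game

variable {V : Type}

/-- One-step combinator: value of a play whose first weight is `w` and whose tail has value `a`. -/
noncomputable def comb (w : WithTop ℤ) (a : ℕ∞) : ℕ∞ := if w < 0 then 0 else wToN w + a

lemma comb_mono {w : WithTop ℤ} {a b : ℕ∞} (h : a ≤ b) : comb w a ≤ comb w b := by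
  unfold comb; split
  · exact le_rfl
  · exact add_le_add_right h _

/-- The value of a fixed Min strategy from a vertex. -/
noncomputable def gval (G : Game V (WithTop ℤ)) (σ : G.MinStrat) (v : V) : ℕ∞ :=
  ⨆ π : G.PlaysMin σ v, EnP (G.wseq π.1)

lemma enpval_eq (G : Game V (WithTop ℤ)) (v : V) : EnPVal G v = ⨅ σ : G.MinStrat, gval G σ v :=
  rfl

instance (G : Game V (WithTop ℤ)) : Nonempty G.MinStrat :=
  ⟨⟨fun x => Classical.choose (G.nosink x), fun x _ => Classical.choose_spec (G.nosink x)⟩⟩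

noncomputable def follow (G : Game V (WithTop ℤ)) (σ : G.MinStrat) (x : V) : V :=
  if G.isMin x then σ.1 x else Classical.choose (G.nosink x)

lemma follow_edge (G : Game V (WithTop ℤ)) (σ : G.MinStrat) (x : V) :
    G.E x (G.follow σ x) := by
  unfold follow; split
  · exact σ.2 x ‹_›
  · exact Classical.choose_spec (G.nosink x)

instance (G : Game V (WithTop ℤ)) (σ : G.MinStrat) (v : V) : Nonempty (G.PlaysMin σ v) := by
  refine ⟨⟨fun n => (G.follow σ)^[n] v, rfl, ?_, ?_⟩⟩
  · intro i
    show G.E ((G.follow σ)^[i] v) ((G.follow σ)^[i+1] v)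
    rw [Function.iterate_succ_apply']
    exact G.follow_edge σ _
  · intro i h
    show (G.follow σ)^[i+1] v = σ.1 ((G.follow σ)^[i] v)
    rw [Function.iterate_succ_apply']
    exact if_pos h

/-- Core lemma: a one-step invariant bounds the value of every consistent play. -/
lemma EnP_le_of_invariant (G : Game V (WithTop ℤ)) (σ : G.MinStrat) (h : V → ℕ∞)
    (h1 : ∀ x, G.isMin x → comb (G.wt x (σ.1 x)) (h (σ.1 x)) ≤ h x)
    (h2 : ∀ x z, ¬ G.isMin x → G.E x z → comb (G.wt x z) (h z) ≤ h x)
    (v : V) (π : G.PlaysMin σ v) : EnP (G.wseq π.1) ≤ h v := by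
  obtain ⟨π, h0, hpath, hcons⟩ := π
  have key : ∀ n, (∀ i < n, ¬ G.wseq π i < 0) →
      (∑ i ∈ Finset.range n, wToN (G.wseq π i)) + h (π n) ≤ h (π 0) := by
    intro n
    induction n with
    | zero => intro _; simp
    | succ n ih =>
      intro hnn
      have step : comb (G.wt (π n) (π (n+1))) (h (π (n+1))) ≤ h (π n) := by
        by_cases hm : G.isMin (π n)
        · have := h1 (π n) hm
          rwa [← hcons n hm] at this
        · exact h2 (π n) (π (n+1)) hm (hpath n)
      have step' : wToN (G.wseq π n) + h (π (n+1)) ≤ h (π n) := by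
        have hne : ¬ G.wt (π n) (π (n+1)) < 0 := hnn n (Nat.lt_succ_self n)
        unfold comb at step
        rw [if_neg hne] at step
        exact step
      calc (∑ i ∈ Finset.range (n+1), wToN (G.wseq π i)) + h (π (n+1))
          = (∑ i ∈ Finset.range n, wToN (G.wseq π i)) + (wToN (G.wseq π n) + h (π (n+1))) := by
            rw [Finset.sum_range_succ, add_assoc]
        _ ≤ (∑ i ∈ Finset.range n, wToN (G.wseq π i)) + h (π n) := add_le_add_right step' _
        _ ≤ h (π 0) := ih (fun i hi => hnn i (hi.trans (Nat.lt_succ_self n)))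
  show EnP (G.wseq π) ≤ h v
  rw [← h0]
  unfold EnP
  split
  · rename_i hex
    calc (∑ i ∈ Finset.range (Nat.find hex), wToN (G.wseq π i))
        ≤ (∑ i ∈ Finset.range (Nat.find hex), wToN (G.wseq π i)) + h (π (Nat.find hex)) :=
          le_add_right le_rfl
      _ ≤ h (π 0) := key _ (fun i hi => Nat.find_min hex hi)
  · rename_i hex
    push_neg at hex
    refine iSup_le fun k => ?_
    calc (∑ i ∈ Finset.range k, wToN (G.wseq π i))
        ≤ (∑ i ∈ Finset.range k, wToN (G.wseq π i)) + h (π k) := le_add_right le_rfl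
      _ ≤ h (π 0) := key _ (fun i _ => not_lt_of_ge (hex i))

lemma gval_le_of_invariant (G : Game V (WithTop ℤ)) (σ : G.MinStrat) (h : V → ℕ∞)
    (h1 : ∀ x, G.isMin x → comb (G.wt x (σ.1 x)) (h (σ.1 x)) ≤ h x)
    (h2 : ∀ x z, ¬ G.isMin x → G.E x z → comb (G.wt x z) (h z) ≤ h x)
    (v : V) : gval G σ v ≤ h v :=
  iSup_le fun π => G.EnP_le_of_invariant σ h h1 h2 v π

/-- `EnP` of a sequence dominates the one-step combination with its tail. -/
lemma comb_tail_le_EnP (w : ℕ → WithTop ℤ) :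
    comb (w 0) (EnP (fun i => w (i+1))) ≤ EnP w := by
  set t : ℕ → WithTop ℤ := fun i => w (i+1) with ht
  unfold comb
  split
  · exact zero_le
  · rename_i h0
    by_cases hex : ∃ k, t k < 0
    · have hw : ∃ k, w k < 0 := ⟨Nat.find hex + 1, Nat.find_spec hex⟩
      have hfind : Nat.find hw = Nat.find hex + 1 := by
        rw [Nat.find_eq_iff]
        refine ⟨Nat.find_spec hex, ?_⟩
        intro m hm
        match m with
        | 0 => exact h0
        | m+1 => exact Nat.find_min hex (by omega)
      rw [EnP, dif_pos hex, EnP, dif_pos hw, hfind, Finset.sum_range_succ']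
      exact le_of_eq (add_comm _ _)
    · have hw : ¬ ∃ k, w k < 0 := by
        rintro ⟨k, hk⟩
        match k with
        | 0 => exact h0 hk
        | k+1 => exact hex ⟨k, hk⟩
      rw [EnP, dif_neg hex, EnP, dif_neg hw, ENat.add_iSup]
      refine iSup_le fun k => ?_
      have : wToN (w 0) + ∑ i ∈ Finset.range k, wToN (t i)
          = ∑ i ∈ Finset.range (k+1), wToN (w i) := by
        rw [Finset.sum_range_succ']; exact add_comm _ _
      rw [this]
      exact le_iSup (fun k => ∑ i ∈ Finset.range k, wToN (w i)) (k+1)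

/-- Easy direction: prepending an edge. -/
lemma comb_gval_le (G : Game V (WithTop ℤ)) (σ : G.MinStrat) {x y : V} (hE : G.E x y)
    (hc : G.isMin x → y = σ.1 x) : comb (G.wt x y) (gval G σ y) ≤ gval G σ x := by
  have main : ∀ ρ : G.PlaysMin σ y, comb (G.wt x y) (EnP (G.wseq ρ.1)) ≤ gval G σ x := by
    intro ρ
    obtain ⟨ρ, hρ0, hρpath, hρcons⟩ := ρ
    set π : ℕ → V := fun n => Nat.casesOn n x ρ with hπ
    have hπP : π 0 = x ∧ G.IsPath π ∧ G.ConsMin σ π := by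
      refine ⟨rfl, ?_, ?_⟩
      · intro i
        match i with
        | 0 => simpa [hπ, hρ0] using hE
        | i+1 => exact hρpath i
      · intro i hm
        match i with
        | 0 => simpa [hπ, hρ0] using hc hm
        | i+1 => exact hρcons i hm
    have hw0 : G.wseq π 0 = G.wt x y := by simp [wseq, hπ, hρ0]
    have hwt : (fun i => G.wseq π (i+1)) = G.wseq ρ := by
      funext i; rfl
    have := comb_tail_le_EnP (G.wseq π)
    rw [hw0, hwt] at this
    exact this.trans (le_iSup (fun π : G.PlaysMin σ x => EnP (G.wseq π.1)) ⟨π, hπP⟩)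
  unfold comb at main ⊢
  split
  · exact zero_le
  · rename_i hneg
    rw [gval, ENat.add_iSup]
    exact iSup_le fun ρ => by have := main ρ; rwa [if_neg hneg] at this

/-- Merging two strategies pointwise by value. -/
lemma merge_le (G : Game V (WithTop ℤ)) (σ₁ σ₂ : G.MinStrat) :
    ∃ σ : G.MinStrat, ∀ v, gval G σ v ≤ gval G σ₁ v ⊓ gval G σ₂ v := by
  refine ⟨⟨fun x => if gval G σ₁ x ≤ gval G σ₂ x then σ₁.1 x else σ₂.1 x, ?_⟩, ?_⟩
  · intro x hx
    dsimp only
    split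
    · exact σ₁.2 x hx
    · exact σ₂.2 x hx
  · intro v
    refine gval_le_of_invariant G _ (fun x => gval G σ₁ x ⊓ gval G σ₂ x) ?_ ?_ v
    · intro x hx
      simp only
      split
      · rename_i hle
        calc comb (G.wt x (σ₁.1 x)) (gval G σ₁ (σ₁.1 x) ⊓ gval G σ₂ (σ₁.1 x))
            ≤ comb (G.wt x (σ₁.1 x)) (gval G σ₁ (σ₁.1 x)) := comb_mono inf_le_left
          _ ≤ gval G σ₁ x := G.comb_gval_le σ₁ (σ₁.2 x hx) (fun _ => rfl)
          _ = gval G σ₁ x ⊓ gval G σ₂ x := (inf_eq_left.mpr hle).symm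
      · rename_i hle
        calc comb (G.wt x (σ₂.1 x)) (gval G σ₁ (σ₂.1 x) ⊓ gval G σ₂ (σ₂.1 x))
            ≤ comb (G.wt x (σ₂.1 x)) (gval G σ₂ (σ₂.1 x)) := comb_mono inf_le_right
          _ ≤ gval G σ₂ x := G.comb_gval_le σ₂ (σ₂.2 x hx) (fun _ => rfl)
          _ = gval G σ₁ x ⊓ gval G σ₂ x := (inf_eq_right.mpr (le_of_not_ge hle)).symm
    · intro x z hx hE
      refine le_inf ?_ ?_
      · exact (comb_mono inf_le_left).trans (G.comb_gval_le σ₁ hE (fun h => absurd h hx))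
      · exact (comb_mono inf_le_right).trans (G.comb_gval_le σ₂ hE (fun h => absurd h hx))

/-- A uniformly optimal positional Min strategy exists. -/
lemma exists_uniform_opt (G : Game V (WithTop ℤ)) [Fintype V] :
    ∃ σ : G.MinStrat, ∀ v, gval G σ v = EnPVal G v := by
  haveI : DecidableEq V := Classical.decEq V
  haveI : Fintype G.MinStrat := Subtype.fintype _
  have main : ∀ s : Finset G.MinStrat, ∃ σ : G.MinStrat,
      ∀ τ ∈ s, ∀ v, gval G σ v ≤ gval G τ v := by
    intro s
    induction s using Finset.induction_on with
    | empty => exact ⟨Classical.arbitrary _, by simp⟩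
    | insert a s hni ih =>
      obtain ⟨σ₀, hσ₀⟩ := ih
      obtain ⟨σ, hσ⟩ := G.merge_le a σ₀
      refine ⟨σ, ?_⟩
      intro τ hτ v
      rcases Finset.mem_insert.mp hτ with rfl | hτ
      · exact (hσ v).trans inf_le_left
      · exact ((hσ v).trans inf_le_right).trans (hσ₀ τ hτ v)
  obtain ⟨σ, hσ⟩ := main Finset.univ
  refine ⟨σ, fun v => le_antisymm ?_ (iInf_le _ σ)⟩
  exact le_iInf fun τ => hσ τ (Finset.mem_univ τ) v

/-- Bellman upper bound at a Min vertex, for every outgoing edge. -/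
lemma min_bellman (G : Game V (WithTop ℤ)) [Fintype V] {v u : V} (hm : G.isMin v)
    (hE : G.E v u) : EnPVal G v ≤ comb (G.wt v u) (EnPVal G u) := by
  obtain ⟨σ, hσ⟩ := G.exists_uniform_opt
  by_contra hcon
  push_neg at hcon
  -- hcon : comb (G.wt v u) (EnPVal G u) < EnPVal G v
  haveI : DecidableEq V := Classical.decEq V
  set φ : V → ℕ∞ := EnPVal G with hφ
  set h : V → ℕ∞ := fun x => if x = v then comb (G.wt v u) (φ u) else φ x with hh
  have hle : ∀ x, h x ≤ φ x := by
    intro x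
    by_cases hq : x = v
    · subst hq
      simpa [hh] using hcon.le
    · simp [hh, hq]
  have huv : u ≠ v ∨ ¬ (¬ G.wt v u < 0) := by
    by_cases hq : u = v
    · subst hq
      right
      intro hpos
      apply absurd hcon
      push_neg
      unfold comb
      rw [if_neg hpos]
      exact le_add_self
    · exact Or.inl hq
  set σ' : G.MinStrat := ⟨Function.update σ.1 v u, by
    intro x hx
    by_cases hq : x = v
    · subst hq; rw [Function.update_self]; exact hE
    · rw [Function.update_of_ne hq]; exact σ.2 x hx⟩ with hσ'
  have key : gval G σ' v ≤ h v := by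
    refine gval_le_of_invariant G σ' h ?_ ?_ v
    · intro x hx
      by_cases hq : x = v
      · subst hq
        have hs : σ'.1 x = u := Function.update_self x u σ.1
        rw [hs]
        rcases huv with hq' | hq'
        · have h1 : h u = φ u := by simp [hh, hq']
          have h2 : h x = comb (G.wt x u) (φ u) := by simp [hh]
          rw [h1, h2]
        · push_neg at hq'
          unfold comb
          rw [if_pos hq']
          exact zero_le
      · have hs : σ'.1 x = σ.1 x := Function.update_of_ne hq u σ.1
        rw [hs]
        have hx1 : h x = φ x := by simp [hh, hq]
        rw [hx1]
        calc comb (G.wt x (σ.1 x)) (h (σ.1 x))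
            ≤ comb (G.wt x (σ.1 x)) (φ (σ.1 x)) := comb_mono (hle _)
          _ = comb (G.wt x (σ.1 x)) (gval G σ (σ.1 x)) := by rw [hσ]
          _ ≤ gval G σ x := G.comb_gval_le σ (σ.2 x hx) (fun _ => rfl)
          _ = φ x := hσ x
    · intro x z hx hEz
      have hq : x ≠ v := fun hq => hx (hq ▸ hm)
      have hx1 : h x = φ x := by simp [hh, hq]
      rw [hx1]
      calc comb (G.wt x z) (h z)
          ≤ comb (G.wt x z) (φ z) := comb_mono (hle _)
        _ = comb (G.wt x z) (gval G σ z) := by rw [hσ]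
        _ ≤ gval G σ x := G.comb_gval_le σ hEz (fun h => absurd h hx)
        _ = φ x := hσ x
  have : φ v ≤ h v := le_trans (iInf_le _ σ') key
  have hv : h v = comb (G.wt v u) (φ u) := by simp [hh]
  rw [hv] at this
  exact absurd hcon (not_lt_of_ge this)

/-- Bellman upper bound at a Max vertex. -/
lemma max_bellman (G : Game V (WithTop ℤ)) [Fintype V] {v : V} (hm : ¬ G.isMin v) :
    EnPVal G v ≤ ⨆ u, ⨆ (_ : G.E v u), comb (G.wt v u) (EnPVal G u) := by
  obtain ⟨σ, hσ⟩ := G.exists_uniform_opt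
  by_contra hcon
  push_neg at hcon
  haveI : DecidableEq V := Classical.decEq V
  set φ : V → ℕ∞ := EnPVal G with hφ
  set M : ℕ∞ := ⨆ u, ⨆ (_ : G.E v u), comb (G.wt v u) (φ u) with hM
  set h : V → ℕ∞ := fun x => if x = v then M else φ x with hh
  have hle : ∀ x, h x ≤ φ x := by
    intro x
    by_cases hq : x = v
    · subst hq
      simpa [hh] using hcon.le
    · simp [hh, hq]
  have key : gval G σ v ≤ h v := by
    refine gval_le_of_invariant G σ h ?_ ?_ v
    · intro x hx
      have hq : x ≠ v := fun hq => hm (hq ▸ hx)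
      have hx1 : h x = φ x := by simp [hh, hq]
      rw [hx1]
      calc comb (G.wt x (σ.1 x)) (h (σ.1 x))
          ≤ comb (G.wt x (σ.1 x)) (φ (σ.1 x)) := comb_mono (hle _)
        _ = comb (G.wt x (σ.1 x)) (gval G σ (σ.1 x)) := by rw [hσ]
        _ ≤ gval G σ x := G.comb_gval_le σ (σ.2 x hx) (fun _ => rfl)
        _ = φ x := hσ x
    · intro x z hx hEz
      by_cases hq : x = v
      · subst hq
        have hx1 : h x = M := by simp [hh]
        rw [hx1]
        have hzM : comb (G.wt x z) (φ z) ≤ M := by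
          rw [hM]
          exact le_iSup₂ (f := fun u (_ : G.E x u) => comb (G.wt x u) (φ u)) z hEz
        by_cases hq' : z = x
        · subst hq'
          have hz1 : h z = M := by simp [hh]
          rw [hz1]
          unfold comb at hzM ⊢
          split
          · exact zero_le
          · rename_i hpos
            rw [if_neg hpos] at hzM
            exact absurd (le_add_self.trans hzM) (not_le_of_gt hcon)
        · have hz1 : h z = φ z := by simp [hh, hq']
          rw [hz1]
          exact hzM
      · have hx1 : h x = φ x := by simp [hh, hq]
        rw [hx1]
        calc comb (G.wt x z) (h z)
            ≤ comb (G.wt x z) (φ z) := comb_mono (hle _)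
          _ = comb (G.wt x z) (gval G σ z) := by rw [hσ]
          _ ≤ gval G σ x := G.comb_gval_le σ hEz (fun h => absurd h hx)
          _ = φ x := hσ x
  have : φ v ≤ h v := le_trans (iInf_le _ σ) key
  have hv : h v = M := by simp [hh]
  rw [hv] at this
  exact absurd hcon (not_lt_of_ge this)

lemma enat_le_pred {x : ℕ∞} {n : ℕ} (h : x < (n : ℕ∞)) : x ≤ ((n - 1 : ℕ) : ℕ∞) := by
  lift x to ℕ using h.ne_top
  rw [Nat.cast_le]
  rw [Nat.cast_lt] at h
  omega


lemma wToN_eq {x : WithTop ℤ} (h : x ≠ ⊤) : wToN x = (((x.untopD 0).toNat : ℕ) : ℕ∞) := by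
  cases x with
  | top => exact absurd rfl h
  | coe a =>
    unfold wToN
    rw [dif_neg h, WithTop.untop_coe, WithTop.untopD_coe]

lemma comb_eq {x : WithTop ℤ} (hneg : ¬ x < 0) (htop : x ≠ ⊤) (a : ℕ∞) :
    comb x a = (((x.untopD 0).toNat : ℕ) : ℕ∞) + a := by
  unfold comb
  rw [if_neg hneg, wToN_eq htop]

lemma untop'_nonneg {x : WithTop ℤ} (hneg : ¬ x < 0) : 0 ≤ x.untopD 0 := by
  cases x with
  | top => simp
  | coe a =>
    rw [WithTop.untopD_coe]
    by_contra hc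
    push_neg at hc
    apply hneg
    rw [show (0 : WithTop ℤ) = ((0 : ℤ) : WithTop ℤ) from rfl, WithTop.coe_lt_coe]
    exact hc

lemma modWt_neg {w : V → V → WithTop ℤ} {φ : V → ℕ∞} {x y : V}
    (h : modWt w φ x y < 0) :
    w x y ≠ ⊤ ∧ φ x ≠ ⊤ ∧ φ y ≠ ⊤ ∧
      ((w x y).untopD 0 + (((φ y).toNat : ℤ)) < (((φ x).toNat : ℤ))) := by
  unfold modWt at h
  split at h
  · exact absurd h (by simp)
  · rename_i hcond
    push_neg at hcond
    refine ⟨hcond.1, hcond.2.1, hcond.2.2, ?_⟩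
    rw [show (0 : WithTop ℤ) = ((0 : ℤ) : WithTop ℤ) from rfl, WithTop.coe_lt_coe] at h
    omega


end Game

open Game

/-- The set of vertices from which Min can ensure to immediately see a negative weight can only
shrink after the potential reduction by `En⁺_G`. -/
theorem negset_shrinks {V : Type} [Fintype V] (G : Game V (WithTop ℤ)) :
    NegSet (modify G (EnPVal G)) ⊆ NegSet G := by
  intro v hv
  rcases hv with ⟨hmin, u, hE, hw⟩ | ⟨hmax, hall⟩
  · -- v is a Min vertex
    left
    refine ⟨hmin, ?_⟩
    obtain ⟨hwt, hφv, hφu, hineq⟩ := modWt_neg hw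
    by_cases hneg : G.wt v u < 0
    · exact ⟨u, hE, hneg⟩
    · exfalso
      have ha : 0 ≤ (G.wt v u).untopD 0 := untop'_nonneg hneg
      have hb := G.min_bellman (u := u) hmin hE
      rw [comb_eq hneg hwt, ← ENat.coe_toNat hφu, ← ENat.coe_toNat hφv, ← Nat.cast_add,
        Nat.cast_le] at hb
      omega
  · -- v is a Max vertex
    right
    refine ⟨hmax, fun u hEu => ?_⟩
    by_contra hneg
    obtain ⟨hwt, hφv, hφu, hineq⟩ := modWt_neg (hall u hEu)
    have ha : 0 ≤ (G.wt v u).untopD 0 := untop'_nonneg hneg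
    set n : ℕ := (EnPVal G v).toNat with hn
    have hn1 : 1 ≤ n := by omega
    have hub : ∀ z, G.E v z →
        comb (G.wt v z) (EnPVal G z) ≤ ((n - 1 : ℕ) : ℕ∞) := by
      intro z hz
      obtain ⟨hwt', _, hφz, hineq'⟩ := modWt_neg (hall z hz)
      apply enat_le_pred
      by_cases hnegz : G.wt v z < 0
      · unfold comb
        rw [if_pos hnegz]
        exact_mod_cast Nat.pos_of_ne_zero (by omega)
      · have ha' : 0 ≤ (G.wt v z).untopD 0 := untop'_nonneg hnegz
        rw [comb_eq hnegz hwt', ← ENat.coe_toNat hφz, ← Nat.cast_add, Nat.cast_lt]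
        omega
    have hbell := G.max_bellman hmax
    have : EnPVal G v ≤ ((n - 1 : ℕ) : ℕ∞) := by
      refine hbell.trans (iSup₂_le ?_)
      exact hub
    rw [← ENat.coe_toNat hφv, ← hn, Nat.cast_le] at this
    omega
end
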